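/- arXiv:1609.00674 — 6 statements merged into one kernel-verified Lean document; each statement's English description precedes it below -/
import Mathlib

section
/- Let G = (V, E) be a graph represented by a k-uniform word w, and let v ∈ V. Then the neighbourhood N(v) of v is splittable with respect to w: there is a cyclic shift of w whose subword induced by N(v) is a concatenation P₁⋯P_k, where each P_i contains every element of N(v) exactly once. -/
/-- Letters `x` and `y` alternate in the word `w`. -/
def Alternate {V : Type*} [DecidableEq V] (w : List V) (x y : V) : Prop :=
  (w.filter fun z => decide (z = x ∨ z = y)).Chain' (· ≠ ·)

/-- The word `w` represents the simple graph `G`. -/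
def Represents {V : Type*} [DecidableEq V] (w : List V) (G : SimpleGraph V) : Prop :=
  (∀ v : V, v ∈ w) ∧ ∀ x y : V, x ≠ y → (G.Adj x y ↔ Alternate w x y)

/-- Each letter of the alphabet occurs exactly `k` times in `w`. -/
def IsUniform {V : Type*} [DecidableEq V] (w : List V) (k : ℕ) : Prop :=
  ∀ v : V, w.count v = k

/-- The crown graph `H_{n,n}`. -/
def Crown (n : ℕ) : SimpleGraph (Fin n ⊕ Fin n) :=
  SimpleGraph.fromRel fun x y =>
    match x, y with
    | Sum.inl i, Sum.inr j => i ≠ j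
    | _, _ => False

/-- `P` is a permutation of the set `A`: each element of `A` occurs exactly once. -/
def IsPermOf {V : Type*} [DecidableEq V] (P : List V) (A : Finset V) : Prop :=
  (∀ a ∈ A, P.count a = 1) ∧ ∀ x ∈ P, x ∈ A


namespace NbhdSplitAux

variable {V : Type*} [DecidableEq V]

/-- The alternating pattern `x v x v ⋯ x v` with `n` copies of each. -/
def pat (v x : V) : ℕ → List V
  | 0 => []
  | n + 1 => x :: v :: pat v x n

lemma pat_append (v x : V) (n : ℕ) : pat v x n ++ [x, v] = pat v x (n + 1) := by
  induction n with
  | zero => rfl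
  | succ n ih => simp only [pat, List.cons_append] at ih ⊢; rw [ih]

lemma eq_nil_of_count (l : List V) (v x : V)
    (hmem : ∀ z ∈ l, z = v ∨ z = x)
    (hx : l.count x = 0) (hv : l.count v = 0) : l = [] := by
  cases l with
  | nil => rfl
  | cons a t =>
    rcases hmem a (by simp) with h | h <;> subst h <;>
      simp [List.count_cons] at hx hv

lemma step_shape (v x : V) (hxv : x ≠ v) (l : List V)
    (hmem : ∀ z ∈ l, z = v ∨ z = x)
    (hch : (v :: l).Chain' (· ≠ ·))
    (hv : 0 < l.count v) :
    ∃ t, l = x :: v :: t := by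
  cases l with
  | nil => simp at hv
  | cons a t =>
    have hch1 : v ≠ a ∧ (a :: t).Chain' (· ≠ ·) := List.isChain_cons_cons.mp hch
    have ha : a = x := by
      rcases hmem a (by simp) with h | h
      · exact absurd h.symm hch1.1
      · exact h
    cases t with
    | nil => simp [List.count_cons, ha, hxv] at hv
    | cons b t' =>
      have hch2 : a ≠ b ∧ (b :: t').Chain' (· ≠ ·) := List.isChain_cons_cons.mp hch1.2
      have hb : b = v := by
        rcases hmem b (by simp) with h | h
        · exact h
        · exact absurd (ha.trans h.symm) hch2.1
      exact ⟨t', by rw [hb, ha]⟩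

lemma B_both (v x : V) (hxv : x ≠ v) : ∀ n (l : List V),
    (∀ z ∈ l, z = v ∨ z = x) → (v :: l).Chain' (· ≠ ·) →
    ((l.count x = n → l.count v = n → l = pat v x n) ∧
     (l.count x = n + 1 → l.count v = n → l = pat v x n ++ [x])) := by
  intro n
  induction n with
  | zero =>
    intro l hmem hch
    constructor
    · intro hx hv; exact eq_nil_of_count l v x hmem hx hv
    · intro hx hv
      cases l with
      | nil => simp at hx
      | cons a t =>
        have ha : a = x := by
          rcases hmem a (by simp) with h | h
          · exfalso; simp [h, List.count_cons] at hv
          · exact h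
        cases t with
        | nil => simp [pat, ha]
        | cons b t' =>
          exfalso
          have hch1 := (List.isChain_cons_cons.mp hch).2
          have hch2 : a ≠ b ∧ (b :: t').Chain' (· ≠ ·) := List.isChain_cons_cons.mp hch1
          rcases hmem b (by simp) with h | h
          · simp [h, List.count_cons] at hv
          · exact hch2.1 (ha.trans h.symm)
  | succ n ih =>
    intro l hmem hch
    have main : ∀ m : ℕ, l.count x = m + 1 → l.count v = n + 1 →
        ∃ t, l = x :: v :: t ∧ (∀ z ∈ t, z = v ∨ z = x) ∧
          (v :: t).Chain' (· ≠ ·) ∧ t.count x = m ∧ t.count v = n := by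
      intro m hx hv
      obtain ⟨t, rfl⟩ := step_shape v x hxv l hmem hch (by omega)
      have hmem' : ∀ z ∈ t, z = v ∨ z = x := fun z hz => hmem z (by simp [hz])
      have hch' : (v :: t).Chain' (· ≠ ·) :=
        (List.isChain_cons_cons.mp (List.isChain_cons_cons.mp hch).2).2
      have hx' : t.count x = m := by
        simp [List.count_cons, hxv, Ne.symm hxv] at hx; omega
      have hv' : t.count v = n := by
        simp [List.count_cons, hxv, Ne.symm hxv] at hv; omega
      exact ⟨t, rfl, hmem', hch', hx', hv'⟩
    constructor
    · intro hx hv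
      obtain ⟨t, rfl, hm, hc, hx', hv'⟩ := main n hx hv
      have := (ih t hm hc).1 hx' hv'
      rw [this]; rfl
    · intro hx hv
      obtain ⟨t, rfl, hm, hc, hx', hv'⟩ := main (n + 1) hx hv
      have := (ih t hm hc).2 hx' hv'
      rw [this]; rfl

/-- Structure of the `{v,x}`-subword of the cyclic shift at the first `v`. -/
lemma shift_filter (v x : V) (hxv : x ≠ v) (a b : List V) (hva : v ∉ a) (k : ℕ)
    (hch : ((a ++ v :: b).filter fun z => decide (z = v ∨ z = x)).Chain' (· ≠ ·))
    (hcx : (a ++ v :: b).count x = k) (hcv : (a ++ v :: b).count v = k) :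
    ((b ++ (a ++ [v])).filter fun z => decide (z = v ∨ z = x)) = pat v x k := by
  set p : V → Bool := fun z => decide (z = v ∨ z = x) with hp
  have hpv : p v = true := by simp [hp]
  have hpx : p x = true := by simp [hp]
  have hmemf : ∀ (l : List V), ∀ z ∈ l.filter p, z = v ∨ z = x := by
    intro l z hz
    have := List.of_mem_filter hz
    simpa [hp] using this
  have hsplit : (a ++ v :: b).filter p = a.filter p ++ v :: b.filter p := by
    rw [List.filter_append, List.filter_cons_of_pos hpv]
  -- a.filter p consists only of x's
  have hax : ∀ z ∈ a.filter p, z = x := by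
    intro z hz
    rcases hmemf a z hz with h | h
    · exact absurd (h ▸ List.mem_of_mem_filter hz) hva
    · exact h
  rw [hsplit] at hch
  have hchsplit := List.isChain_append.mp hch
  have hfa : a.filter p = [] ∨ a.filter p = [x] := by
    rcases h : a.filter p with _ | ⟨y, t⟩
    · exact Or.inl rfl
    · rcases t with _ | ⟨y', t'⟩
      · exact Or.inr (by rw [hax y (by simp [h])])
      · exfalso
        have hchfa := hchsplit.1
        rw [h] at hchfa
        have := (List.isChain_cons_cons.mp hchfa).1
        rw [hax y (by simp [h]), hax y' (by simp [h])] at this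
        exact this rfl
  -- counts in the filtered word
  have hcfx : (a.filter p).count x + (b.filter p).count x = k := by
    have : ((a ++ v :: b).filter p).count x = k := by
      rw [List.count_filter (by simpa using hpx)]; exact hcx
    rw [hsplit, List.count_append, List.count_cons] at this
    simp [Ne.symm hxv] at this
    omega
  have hcfv : (b.filter p).count v + 1 = k := by
    have : ((a ++ v :: b).filter p).count v = k := by
      rw [List.count_filter (by simpa using hpv)]; exact hcv
    rw [hsplit, List.count_append, List.count_cons] at this
    have hfav : (a.filter p).count v = 0 := by
      rw [List.count_eq_zero]
      intro hmem
      exact hva (List.mem_of_mem_filter hmem)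
    simp [hfav] at this
    omega
  obtain ⟨m, rfl⟩ : ∃ m, k = m + 1 := ⟨(b.filter p).count v, by omega⟩
  have hgoal : (b ++ (a ++ [v])).filter p =
      b.filter p ++ (a.filter p ++ [v]) := by
    rw [List.filter_append, List.filter_append]
    congr 1
    congr 1
    simp [List.filter_cons_of_pos hpv]
  rcases hfa with h | h
  · -- a.filter p = [], pattern starts with v
    rw [h] at hsplit hcfx
    have hbfm : ∀ z ∈ b.filter p, z = v ∨ z = x := hmemf b
    have hchb : (v :: b.filter p).Chain' (· ≠ ·) := hchsplit.2.1
    have hbx : (b.filter p).count x = m + 1 := by simpa using hcfx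
    have hbv : (b.filter p).count v = m := by omega
    have hb := (B_both v x hxv m (b.filter p) hbfm hchb).2 hbx hbv
    rw [hgoal, h, hb]
    simpa using pat_append v x m
  · -- a.filter p = [x], pattern starts with x
    rw [h] at hsplit hcfx
    have hbfm : ∀ z ∈ b.filter p, z = v ∨ z = x := hmemf b
    have hchb : (v :: b.filter p).Chain' (· ≠ ·) := hchsplit.2.1
    have hbx : (b.filter p).count x = m := by
      simp [List.count_cons] at hcfx; omega
    have hbv : (b.filter p).count v = m := by omega
    have hb := (B_both v x hxv m (b.filter p) hbfm hchb).1 hbx hbv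
    rw [hgoal, h, hb]
    simpa using pat_append v x m

lemma first_occ {v : V} : ∀ {l : List V}, v ∈ l → ∃ a b, l = a ++ v :: b ∧ v ∉ a := by
  intro l hl
  induction l with
  | nil => cases hl
  | cons y t ih =>
    by_cases hy : y = v
    · exact ⟨[], t, by rw [hy]; rfl, by simp⟩
    · have hvt : v ∈ t := by
        rcases List.mem_cons.mp hl with h | h
        · exact absurd h.symm hy
        · exact h
      rcases ih hvt with ⟨a, b, rfl, hva⟩
      refine ⟨y :: a, b, rfl, ?_⟩
      simp only [List.mem_cons, not_or]
      exact ⟨fun h => hy h.symm, hva⟩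

lemma key (v : V) (A : Finset V) (hv : v ∉ A) :
    ∀ k (c : List V),
    (∀ x ∈ A, (c.filter fun z => decide (z = v ∨ z = x)) = pat v x k) →
    ∃ P : Fin k → List V, (∀ i, IsPermOf (P i) A) ∧
      (c.filter fun z => decide (z ∈ A)) = (List.ofFn P).flatten := by
  rcases A.eq_empty_or_nonempty with rfl | ⟨x₀, hx₀⟩
  · intro k c _
    refine ⟨fun _ => [], fun i => ⟨by simp, by simp⟩, ?_⟩
    rw [List.filter_eq_nil_iff.mpr (by simp), Eq.comm, List.flatten_eq_nil_iff]
    intro l hl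
    obtain ⟨_, rfl⟩ := List.mem_ofFn.mp hl
    rfl
  · intro k
    induction k with
    | zero =>
      intro c hc
      refine ⟨fun i => i.elim0, fun i => i.elim0, ?_⟩
      rw [List.ofFn_zero, List.flatten_nil, List.filter_eq_nil_iff]
      intro z hz hzA
      have hzA' : z ∈ A := by simpa using hzA
      have := hc z hzA'
      have hzin : z ∈ c.filter fun y => decide (y = v ∨ y = z) :=
        List.mem_filter.mpr ⟨hz, by simp⟩
      rw [this] at hzin
      simp [pat] at hzin
    | succ k ih =>
      intro c hc
      have hvc : v ∈ c := by
        have := hc x₀ hx₀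
        have : v ∈ c.filter fun z => decide (z = v ∨ z = x₀) := by
          rw [this]; simp [pat]
        exact List.mem_of_mem_filter this
      obtain ⟨c₁, c₂, rfl, hvc₁⟩ := first_occ hvc
      have hparts : ∀ x ∈ A, (c₁.filter fun z => decide (z = v ∨ z = x)) = [x] ∧
          (c₂.filter fun z => decide (z = v ∨ z = x)) = pat v x k := by
        intro x hx
        have hxv : x ≠ v := fun h => hv (h ▸ hx)
        have heq := hc x hx
        rw [List.filter_append, List.filter_cons_of_pos (by simp)] at heq
        have hf₁v : v ∉ c₁.filter fun z => decide (z = v ∨ z = x) :=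
          fun h => hvc₁ (List.mem_of_mem_filter h)
        rcases h1 : c₁.filter fun z => decide (z = v ∨ z = x) with _ | ⟨y, t⟩
        · rw [h1] at heq
          simp only [List.nil_append, pat, List.cons.injEq] at heq
          exact absurd heq.1.symm hxv
        · have hyx : y = x ∧ t ++ v :: (c₂.filter fun z => decide (z = v ∨ z = x))
              = v :: pat v x k := by
            rw [h1] at heq
            simp only [pat, List.cons_append, List.cons.injEq] at heq
            exact ⟨heq.1, heq.2⟩
          rcases h2 : t with _ | ⟨y', t'⟩
          · rw [h2] at hyx
            simp only [List.nil_append, List.cons.injEq] at hyx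
            exact ⟨by simp [h1, h2, hyx.1], hyx.2.2⟩
          · exfalso
            have : y' = v := by
              have := hyx.2
              rw [h2] at this
              simp only [List.cons_append, List.cons.injEq] at this
              exact this.1
            apply hf₁v
            rw [h1, h2, ← this]
            simp
      obtain ⟨P', hP', hflat⟩ := ih c₂ (fun x hx => (hparts x hx).2)
      set P₀ : List V := c₁.filter fun z => decide (z ∈ A) with hP₀
      have hperm₀ : IsPermOf P₀ A := by
        constructor
        · intro a ha
          have h1 : P₀.count a = c₁.count a := by
            rw [hP₀]; exact List.count_filter (by simpa using ha)
          have h2 : c₁.count a = (c₁.filter fun z => decide (z = v ∨ z = a)).count a :=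
            (List.count_filter (by simp)).symm
          rw [h1, h2, (hparts a ha).1]
          simp
        · intro x hx
          have := List.of_mem_filter hx
          simpa using this
      refine ⟨Fin.cons P₀ P', ?_, ?_⟩
      · intro i
        refine Fin.cases ?_ ?_ i
        · simpa using hperm₀
        · intro j; simpa using hP' j
      · rw [List.filter_append, List.filter_cons_of_neg (by simpa using hv)]
        rw [List.ofFn_succ]
        simp only [Fin.cons_zero, Fin.cons_succ, List.flatten_cons]
        rw [hflat]

end NbhdSplitAux

/-- The neighbourhood of any vertex is splittable: some cyclic shift of `w` has
its subword induced by `N(v)` equal to a concatenation of `k` permutations of `N(v)`. -/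
theorem neighborhood_splittable {V : Type*} [Fintype V] [DecidableEq V]
    (G : SimpleGraph V) [DecidableRel G.Adj] (w : List V) (k : ℕ)
    (hk : IsUniform w k) (hrep : Represents w G) (v : V) :
    ∃ u u' : List V, w = u ++ u' ∧
      ∃ P : Fin k → List V, (∀ i, IsPermOf (P i) (G.neighborFinset v)) ∧
        ((u' ++ u).filter fun z => decide (z ∈ G.neighborFinset v)) =
          (List.ofFn P).flatten := by

  have hvA : v ∉ G.neighborFinset v := by simp
  have hvw : v ∈ w := hrep.1 v
  obtain ⟨a, b, rfl, hva⟩ := NbhdSplitAux.first_occ hvw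
  refine ⟨a ++ [v], b, by simp, ?_⟩
  apply NbhdSplitAux.key v (G.neighborFinset v) hvA k
  intro x hx
  have hadj : G.Adj v x := by simpa using hx
  have hne : v ≠ x := G.ne_of_adj hadj
  have halt : Alternate (a ++ v :: b) v x := (hrep.2 v x hne).mp hadj
  exact NbhdSplitAux.shift_filter v x hne.symm a b hva k halt (hk x) (hk v)
end

section
/- Let w be a k-uniform word representing a graph G = (V, E), and let A ⊆ V be such that the subword of w induced by A is a concatenation P₁⋯P_k in which each P_i contains every element of A exactly once. Suppose a, b ∈ A, x ∉ A, {a, x} ∈ E and {b, x} ∈ E. If the first occurrence of a in w precedes the first occurrence of x in w, which in turn precedes the first occurrence of b in w, then {a, b} ∈ E. -/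
open List

namespace Lemma1Aux

variable {α : Type*} [DecidableEq α]

set_option linter.unusedSectionVars false

/-- Every prefix of a filter is the filter of a prefix. -/
lemma exists_prefix_of_prefix_filter (pred : α → Bool) :
    ∀ (w q : List α), q <+: w.filter pred → ∃ p, p <+: w ∧ q = p.filter pred := by
  intro w
  induction w with
  | nil =>
    intro q hq
    rw [filter_nil, prefix_nil] at hq
    exact ⟨[], prefix_rfl, by simp [hq]⟩
  | cons c w ih =>
    intro q hq
    by_cases hc : pred c
    · rw [filter_cons_of_pos hc] at hq
      match q with
      | [] => exact ⟨[], nil_prefix, by simp⟩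
      | d :: q' =>
        rw [cons_prefix_cons] at hq
        obtain ⟨rfl, hq'⟩ := hq
        obtain ⟨p, hp, rfl⟩ := ih q' hq'
        exact ⟨d :: p, cons_prefix_cons.mpr ⟨rfl, hp⟩, (filter_cons_of_pos hc).symm⟩
    · rw [filter_cons_of_neg (by simpa using hc)] at hq
      obtain ⟨p, hp, rfl⟩ := ih q hq
      exact ⟨c :: p, cons_prefix_cons.mpr ⟨rfl, hp⟩,
        (filter_cons_of_neg (by simpa using hc)).symm⟩

/-- In an alternating word over `{a,x}` with equal counts which starts with `a`,
every prefix has `count x ≤ count a ≤ count x + 1`. -/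
lemma alt_counts (a x : α) (hax : a ≠ x) :
    ∀ v : List α, v.Chain' (· ≠ ·) → (∀ z ∈ v, z = a ∨ z = x) →
      v.count a = v.count x → (∀ c t, v = c :: t → c = a) →
      ∀ q, q <+: v → q.count x ≤ q.count a ∧ q.count a ≤ q.count x + 1
  | [] => by
    intro _ _ _ _ q hq
    rw [prefix_nil] at hq; subst hq; simp
  | [c] => by
    intro _ _ hcnt hhead q hq
    have hc : a = c := (hhead c [] rfl).symm
    subst hc
    simp [count_cons, count_nil, hax, Ne.symm hax] at hcnt
  | c :: d :: t => by
    intro hch hz hcnt hhead q hq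
    have hc : a = c := (hhead c _ rfl).symm
    subst hc
    have hd : x = d := by
      rcases hz d (by simp) with h | h
      · exact absurd h.symm (isChain_cons_cons.mp hch).1
      · exact h.symm
    subst hd
    have hch' : Chain' (· ≠ ·) t := hch.tail.tail
    have hz' : ∀ z ∈ t, z = a ∨ z = x := fun z hzt => hz z (by simp [hzt])
    have hcnt' : t.count a = t.count x := by
      simp only [count_cons, beq_iff_eq, if_pos rfl, if_neg hax, if_neg (Ne.symm hax)] at hcnt
      omega
    have hhead' : ∀ c' t', t = c' :: t' → c' = a := by
      intro c' t' ht; subst ht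
      rcases hz c' (by simp) with h | h
      · exact h
      · exfalso
        exact (isChain_cons_cons.mp (hch.tail)).1 h.symm
    have IH := alt_counts a x hax t hch' hz' hcnt' hhead'
    match q, hq with
    | [], _ => simp
    | [c'], hq =>
      obtain ⟨hc', -⟩ := cons_prefix_cons.mp hq
      subst hc'
      simp [count_cons, count_nil, hax, Ne.symm hax]
    | c' :: d' :: q', hq =>
      obtain ⟨hc', hq2⟩ := cons_prefix_cons.mp hq
      obtain ⟨hd', hq3⟩ := cons_prefix_cons.mp hq2
      subst hc'; subst hd'
      have := IH q' hq3
      simp only [count_cons, beq_iff_eq, if_pos rfl, if_neg hax, if_neg (Ne.symm hax)]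
      omega

/-- Converse: prefix counting condition implies alternation. -/
lemma good_chain (a b : α) (hab : a ≠ b) :
    ∀ v : List α, (∀ z ∈ v, z = a ∨ z = b) →
      (∀ q, q <+: v → q.count b ≤ q.count a ∧ q.count a ≤ q.count b + 1) →
      v.Chain' (· ≠ ·)
  | [] => by intro _ _; exact isChain_nil
  | [c] => by intro _ _; exact isChain_singleton _
  | c :: d :: t => by
    intro hz hpre
    have hc : a = c := by
      rcases hz c (by simp) with h | h
      · exact h.symm
      · exfalso
        have := hpre [c] ⟨d :: t, rfl⟩
        rw [h] at this
        simp [count_cons, count_nil, hab, Ne.symm hab] at this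
    subst hc
    have hd : b = d := by
      rcases hz d (by simp) with h | h
      · exfalso
        have := hpre [a, d] ⟨t, rfl⟩
        rw [h] at this
        simp [count_cons, count_nil, hab, Ne.symm hab] at this
      · exact h.symm
    subst hd
    have hz' : ∀ z ∈ t, z = a ∨ z = b := fun z hzt => hz z (by simp [hzt])
    have hpre' : ∀ q, q <+: t → q.count b ≤ q.count a ∧ q.count a ≤ q.count b + 1 := by
      intro q hq
      have := hpre (a :: b :: q) (cons_prefix_cons.mpr ⟨rfl, cons_prefix_cons.mpr ⟨rfl, hq⟩⟩)
      simp only [count_cons, beq_iff_eq, if_pos rfl, if_neg hab, if_neg (Ne.symm hab)] at this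
      omega
    have IH := good_chain a b hab t hz' hpre'
    refine isChain_cons_cons.mpr ?_
    refine ⟨hab, isChain_cons.mpr ⟨?_, IH⟩⟩
    intro y hy
    cases t with
    | nil => simp at hy
    | cons c' t' =>
      simp only [head?_cons, Option.mem_def, Option.some.injEq] at hy
      subst hy
      intro hby
      subst hby
      have := hpre [a, b, b] ⟨t', rfl⟩
      simp [count_cons, count_nil, hab, Ne.symm hab] at this

/-- Counting across a flatten of blocks each containing `a` and `b` once. -/
lemma blocks_count (a b : α) :
    ∀ L : List (List α), (∀ B ∈ L, B.count a = 1 ∧ B.count b = 1) →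
      ∀ q, q <+: L.flatten → q.count a ≤ q.count b + 1 := by
  intro L
  induction L with
  | nil =>
    intro _ q hq
    rw [flatten_nil, prefix_nil] at hq; simp [hq]
  | cons B L ih =>
    intro hB q hq
    rw [flatten_cons] at hq
    obtain ⟨r, hr⟩ := hq
    obtain ⟨n, rfl⟩ : ∃ n, q = (B ++ L.flatten).take n :=
      ⟨q.length, by rw [← hr, take_left' rfl]⟩
    have hBa := (hB B (by simp)).1
    have hBb := (hB B (by simp)).2
    by_cases hn : n ≤ B.length
    · rw [take_append_of_le_length hn]
      have hsub : B.take n <+ B := take_sublist _ _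
      have := hsub.count_le a
      omega
    · push_neg at hn
      rw [take_append, take_of_length_le (le_of_lt hn)]
      rw [count_append, count_append]
      have hIH := ih (fun C hC => hB C (by simp [hC]))
        (L.flatten.take (n - B.length)) (take_prefix _ _)
      omega

/-- If the first occurrence of `a` precedes the first occurrence of `x`, then the
filter of `w` to a predicate only satisfied by `a` and `x` starts with `a`. -/
lemma filter_head_eq (w : List α) (a x : α) (pred : α → Bool)
    (hpa : pred a = true)
    (hpz : ∀ z, pred z = true → z = a ∨ z = x)
    (haw : a ∈ w) (hlt : w.idxOf a < w.idxOf x) :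
    ∀ c t, w.filter pred = c :: t → c = a := by
  intro c t hw
  set n := w.idxOf x with hn
  have hia : w.idxOf a < w.length := idxOf_lt_length_iff.mpr haw
  have hmem : a ∈ w.take n := by
    rw [mem_take_iff_getElem]
    exact ⟨w.idxOf a, by omega, getElem_idxOf hia⟩
  have hxmem : x ∉ w.take n := by
    intro hxm
    rw [mem_take_iff_getElem] at hxm
    obtain ⟨i, hi, hieq⟩ := hxm
    have hlt2 : i < w.findIdx (· == x) := by
      have : i < n := (Nat.lt_min.mp hi).1
      rw [hn] at this
      simpa [List.idxOf] using this
    have := List.not_of_lt_findIdx hlt2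
    simp [hieq] at this
  have hq : (w.take n).filter pred <+: w.filter pred := (take_prefix n w).filter pred
  rw [hw] at hq
  cases e : (w.take n).filter pred with
  | nil =>
    exfalso
    have : a ∈ (w.take n).filter pred := mem_filter.mpr ⟨hmem, hpa⟩
    rw [e] at this; simp at this
  | cons c' t' =>
    rw [e] at hq
    obtain ⟨hcc, -⟩ := cons_prefix_cons.mp hq
    subst hcc
    have hct : c' ∈ (w.take n).filter pred := by rw [e]; simp
    rw [mem_filter] at hct
    rcases hpz c' hct.2 with h | h
    · exact h
    · exact absurd (h ▸ hct.1) hxmem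

end Lemma1Aux

/-- Lemma 1 of the paper. If the subword of `w` induced by a splittable-style set
`A` is a concatenation of `k` permutations of `A`, `a, b ∈ A`, `x ∉ A`, both `a`
and `b` are adjacent to `x`, and the first occurrences satisfy `a₁ < x₁ < b₁`,
then `a` and `b` are adjacent. -/
theorem splittable_between_adjacent {V : Type*} [DecidableEq V]
    (G : SimpleGraph V) (w : List V) (k : ℕ)
    (hk : IsUniform w k) (hrep : Represents w G)
    (A : Finset V) (P : Fin k → List V)
    (hP : ∀ i, IsPermOf (P i) A)
    (hind : (w.filter fun z => decide (z ∈ A)) = (List.ofFn P).flatten)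
    (a b x : V) (ha : a ∈ A) (hb : b ∈ A) (hx : x ∉ A)
    (hax : G.Adj a x) (hbx : G.Adj b x)
    (h1 : w.idxOf a < w.idxOf x) (h2 : w.idxOf x < w.idxOf b) :
    G.Adj a b := by
  classical
  obtain ⟨hmem, hadj⟩ := hrep
  have haxne : a ≠ x := hax.ne
  have hxbne : x ≠ b := hbx.ne'
  have hab : a ≠ b := by rintro rfl; omega
  have A1 : Alternate w a x := (hadj a x haxne).mp hax
  have A2 : Alternate w x b := (hadj x b hxbne).mp hbx.symm
  have C1 : ∀ p : List V, p <+: w → p.count x ≤ p.count a ∧ p.count a ≤ p.count x + 1 := by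
    intro p hp
    have hhead := Lemma1Aux.filter_head_eq w a x (fun z => decide (z = a ∨ z = x))
      (by simp) (fun z hz => by simpa using hz) (hmem a) h1
    have key := Lemma1Aux.alt_counts a x haxne (w.filter fun z => decide (z = a ∨ z = x))
      A1 (fun z hz => by simpa using (List.mem_filter.mp hz).2)
      (by simp [hk a, hk x])
      hhead (p.filter fun z => decide (z = a ∨ z = x)) (hp.filter _)
    simpa using key
  have C2 : ∀ p : List V, p <+: w → p.count b ≤ p.count x ∧ p.count x ≤ p.count b + 1 := by
    intro p hp
    have hhead := Lemma1Aux.filter_head_eq w x b (fun z => decide (z = x ∨ z = b))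
      (by simp) (fun z hz => by simpa using hz) (hmem x) h2
    have key := Lemma1Aux.alt_counts x b hxbne (w.filter fun z => decide (z = x ∨ z = b))
      A2 (fun z hz => by simpa using (List.mem_filter.mp hz).2)
      (by simp [hk x, hk b])
      hhead (p.filter fun z => decide (z = x ∨ z = b)) (hp.filter _)
    simpa using key
  have C3 : ∀ p : List V, p <+: w → p.count a ≤ p.count b + 1 := by
    intro p hp
    have hblocks : ∀ B ∈ List.ofFn P, B.count a = 1 ∧ B.count b = 1 := by
      intro B hB
      rw [List.mem_ofFn] at hB
      obtain ⟨i, rfl⟩ := hB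
      exact ⟨(hP i).1 a ha, (hP i).1 b hb⟩
    have hq : (p.filter fun z => decide (z ∈ A)) <+: (List.ofFn P).flatten := by
      rw [← hind]; exact hp.filter _
    have key := Lemma1Aux.blocks_count a b (List.ofFn P) hblocks _ hq
    rwa [List.count_filter (by simpa using ha), List.count_filter (by simpa using hb)] at key
  have D : ∀ q, q <+: (w.filter fun z => decide (z = a ∨ z = b)) →
      q.count b ≤ q.count a ∧ q.count a ≤ q.count b + 1 := by
    intro q hq
    obtain ⟨p, hp, rfl⟩ := Lemma1Aux.exists_prefix_of_prefix_filter _ w q hq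
    rw [List.count_filter (by simp), List.count_filter (by simp)]
    have c1 := C1 p hp
    have c2 := C2 p hp
    have c3 := C3 p hp
    omega
  have halt : Alternate w a b :=
    Lemma1Aux.good_chain a b hab _ (fun z hz => by simpa using (List.mem_filter.mp hz).2) D
  exact (hadj a b hab).mpr halt
end

section
/- Let n ≥ 5 and let w be a k-uniform word representing the crown graph H_{n,n}. Then the set A = {1, …, n} (one part of the bipartition) is splittable with respect to w: there is a cyclic shift of w whose subword induced by A is a concatenation P₁⋯P_k, where each P_i contains every element of A exactly once. -/
/-- The "left" part `{1, …, n}` of the vertex set of the crown graph `H_{n,n}`. -/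
def leftSet (n : ℕ) : Finset (Fin n ⊕ Fin n) :=
  Finset.univ.filter fun z => z.isLeft

set_option linter.unusedSectionVars false
set_option linter.unusedVariables false

namespace CrownSplit

attribute [local instance 2000] instBEqOfDecidableEq

section Generic

variable {α : Type*}

/-- The alternating word `a b a b …` of length `m`. -/
def altW (a b : α) : ℕ → List α
  | 0 => []
  | m + 1 => a :: altW b a m

@[simp] lemma altW_zero (a b : α) : altW a b 0 = [] := rfl
@[simp] lemma altW_succ (a b : α) (m : ℕ) : altW a b (m + 1) = a :: altW b a m := rfl

lemma length_altW (a b : α) (m : ℕ) : (altW a b m).length = m := by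
  induction m generalizing a b with
  | zero => rfl
  | succ m ih => simp [ih]

lemma head?_altW (a b : α) {m : ℕ} (hm : 0 < m) : (altW a b m).head? = some a := by
  cases m with
  | zero => omega
  | succ m => rfl

variable [DecidableEq α]

lemma count_altW {a b : α} (h : a ≠ b) (m : ℕ) :
    (altW a b m).count a = (m + 1) / 2 ∧ (altW a b m).count b = m / 2 := by
  induction m generalizing a b with
  | zero => simp
  | succ m ih =>
    obtain ⟨h1, h2⟩ := ih h.symm
    constructor
    · rw [altW_succ, List.count_cons_self, h2]
      omega
    · rw [altW_succ, List.count_cons_of_ne h, h1]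

lemma chain'_altW {a b : α} (h : a ≠ b) (m : ℕ) : (altW a b m).Chain' (· ≠ ·) := by
  induction m generalizing a b with
  | zero => exact List.isChain_nil
  | succ m ih =>
    rw [altW_succ]
    show List.IsChain _ (a :: altW b a m)
    rw [List.isChain_cons]
    refine ⟨?_, ih h.symm⟩
    intro y hy
    cases m with
    | zero => simp at hy
    | succ m => rw [head?_altW b a (by omega)] at hy; simp at hy; subst hy; exact h

lemma altW_append_even (a b : α) (s m : ℕ) :
    altW a b (2 * s + m) = altW a b (2 * s) ++ altW a b m := by
  induction s with
  | zero => simp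
  | succ s ih =>
    have e1 : 2 * (s + 1) + m = (2 * s + m) + 1 + 1 := by ring
    have e2 : 2 * (s + 1) = (2 * s) + 1 + 1 := by ring
    rw [e1, e2, altW_succ, altW_succ, altW_succ, altW_succ, ih]
    simp

lemma alt_char {a b : α} (h : a ≠ b) :
    ∀ (σ : List α), σ.Chain' (· ≠ ·) → (∀ x ∈ σ, x = a ∨ x = b) →
      σ = altW a b σ.length ∨ σ = altW b a σ.length := by
  intro σ
  induction σ with
  | nil => intro _ _; left; rfl
  | cons x τ ih =>
    intro hc hm
    have hcτ : τ.Chain' (· ≠ ·) := (List.isChain_cons.mp hc).2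
    have hhd : ∀ y ∈ τ.head?, x ≠ y := (List.isChain_cons.mp hc).1
    have hmτ : ∀ z ∈ τ, z = a ∨ z = b := fun z hz => hm z (List.mem_cons_of_mem _ hz)
    have hx := hm x (List.mem_cons_self)
    obtain hih := ih hcτ hmτ
    rcases hx with hx | hx
    · left
      subst hx
      have hτ : τ = altW b x τ.length := by
        rcases hih with h1 | h1
        · cases hτl : τ.length with
          | zero => rw [hτl] at h1; simp only [altW_zero] at h1 ⊢; exact h1
          | succ m =>
            exfalso
            have : τ.head? = some x := by rw [h1, hτl]; exact head?_altW _ _ (by omega)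
            exact hhd x this rfl
        · exact h1
      show x :: τ = altW x b (τ.length + 1)
      rw [altW_succ]
      exact congrArg _ hτ
    · right
      subst hx
      have hτ : τ = altW a x τ.length := by
        rcases hih with h1 | h1
        · exact h1
        · cases hτl : τ.length with
          | zero => rw [hτl] at h1; simp only [altW_zero] at h1 ⊢; exact h1
          | succ m =>
            exfalso
            have : τ.head? = some x := by rw [h1, hτl]; exact head?_altW _ _ (by omega)
            exact hhd x this rfl
      show x :: τ = altW x a (τ.length + 1)
      rw [altW_succ]
      exact congrArg _ hτ

/-- Any alternating word over `{a,b}` has balanced counts. -/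
lemma alt_count_le {a b : α} (h : a ≠ b) {σ : List α} (hc : σ.Chain' (· ≠ ·))
    (hm : ∀ x ∈ σ, x = a ∨ x = b) : σ.count a ≤ σ.count b + 1 := by
  rcases alt_char h σ hc hm with h1 | h1
  · rw [h1, (count_altW h σ.length).1, (count_altW h σ.length).2]; omega
  · rw [h1, (count_altW h.symm σ.length).2, (count_altW h.symm σ.length).1]; omega

/-- An alternating word over `{a,b}` starting with `b` has at most as many `a`s as `b`s. -/
lemma alt_count_head {a b : α} (h : a ≠ b) {σ : List α} (hc : σ.Chain' (· ≠ ·))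
    (hm : ∀ x ∈ σ, x = a ∨ x = b) (hh : σ.head? = some b) : σ.count a ≤ σ.count b := by
  rcases alt_char h σ hc hm with h1 | h1
  · cases hl : σ.length with
    | zero =>
      have : σ = [] := List.length_eq_zero_iff.mp hl
      simp [this]
    | succ m =>
      exfalso
      rw [h1, hl, head?_altW _ _ (by omega)] at hh
      simp at hh
      exact h hh
  · rw [h1, (count_altW h.symm σ.length).2, (count_altW h.symm σ.length).1]; omega

/-- If a filtered word fails to alternate, there are two equal consecutive
filtered letters. -/
lemma not_chain'_filter (p : α → Bool) :
    ∀ (l : List α), ¬ (l.filter p).Chain' (· ≠ ·) →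
      ∃ u c mid rest, l = u ++ c :: (mid ++ c :: rest) ∧ p c = true ∧ mid.filter p = [] := by
  intro l
  induction l with
  | nil => intro h; exact absurd (List.isChain_nil : List.Chain' _ []) h
  | cons x t ih =>
    intro h
    by_cases hp : p x
    · rw [List.filter_cons_of_pos hp] at h
      change ¬ List.IsChain _ (x :: t.filter p) at h
      rw [List.isChain_cons] at h
      rcases Classical.em ((t.filter p).Chain' (· ≠ ·)) with hch | hch
      · have hA : ¬ ∀ y ∈ (t.filter p).head?, x ≠ y := fun hA => h ⟨hA, hch⟩
        push_neg at hA
        obtain ⟨y, hy, hxy⟩ := hA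
        cases hft : t.filter p with
        | nil => rw [hft] at hy; simp at hy
        | cons z zt =>
          rw [hft] at hy
          simp at hy
          subst hy
          subst hxy
          obtain ⟨l₁, l₂, hl, hl₁, hpz, _⟩ := List.filter_eq_cons_iff.mp hft
          refine ⟨[], x, l₁, l₂, ?_, hp, ?_⟩
          · simp [hl]
          · exact List.filter_eq_nil_iff.mpr hl₁
      · obtain ⟨u, c, mid, rest, h1, h2, h3⟩ := ih hch
        exact ⟨x :: u, c, mid, rest, by simp [h1], h2, h3⟩
    · rw [List.filter_cons_of_neg (by simpa using hp)] at h
      obtain ⟨u, c, mid, rest, h1, h2, h3⟩ := ih h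
      exact ⟨x :: u, c, mid, rest, by simp [h1], h2, h3⟩

lemma sum_count_univ [Fintype α] (l : List α) : ∑ v : α, l.count v = l.length := by
  induction l with
  | nil => simp
  | cons x t ih =>
    simp only [List.count_cons, List.length_cons, ← ih]
    rw [Finset.sum_add_distrib]
    congr 1
    simp [Finset.sum_ite_eq]

lemma flatten_chunks : ∀ (k : ℕ) (nn : ℕ) (l : List α), l.length = k * nn →
    (List.ofFn fun i : Fin k => (l.drop (i * nn)).take nn).flatten = l := by
  intro k
  induction k with
  | zero =>
    intro nn l hl
    simp at hl
    simp [hl]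
  | succ k ih =>
    intro nn l hl
    rw [List.ofFn_succ]
    simp only [List.flatten_cons]
    have h0 : ((0 : Fin (k+1)) : ℕ) = 0 := rfl
    have hrest : (List.ofFn fun i : Fin k => (l.drop ((i.succ : ℕ) * nn)).take nn)
        = List.ofFn fun i : Fin k => ((l.drop nn).drop ((i : ℕ) * nn)).take nn := by
      congr 1
      funext i
      rw [List.drop_drop]
      congr 2
      simp [Fin.val_succ]
      ring
    rw [h0]
    simp only [Nat.zero_mul, List.drop_zero]
    rw [hrest, ih nn (l.drop nn) (by simp [hl, Nat.add_mul]), List.take_append_drop]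

lemma exists_prefix_len (f : ℕ → ℕ) (hstep : ∀ t, f (t + 1) ≤ f t + 1) (h0 : f 0 = 0) :
    ∀ (s : ℕ) (M : ℕ), M ≤ f s → ∃ t ≤ s, f t = M := by
  intro s
  induction s with
  | zero => intro M hM; exact ⟨0, le_refl 0, by omega⟩
  | succ s ih =>
    intro M hM
    by_cases h : M ≤ f s
    · obtain ⟨t, ht, hft⟩ := ih M h
      exact ⟨t, by omega, hft⟩
    · have := hstep s
      exact ⟨s + 1, le_refl _, by omega⟩

lemma counts_eq {nn t : ℕ} (c : Fin nn → ℕ) (hsum : ∑ i, c i = t * nn)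
    (hpair : ∀ i j, c i ≤ c j + 1) : ∀ i, c i = t := by
  intro i
  by_contra hne
  rcases Nat.lt_or_ge (c i) t with hlt | hge
  · -- all c j ≤ c i + 1 ≤ t, and c i < t strictly
    have hub : ∀ j, c j ≤ t := fun j => le_trans (hpair j i) (by omega)
    have : ∑ j, c j < ∑ _j : Fin nn, t := by
      apply Finset.sum_lt_sum (fun j _ => hub j)
      exact ⟨i, Finset.mem_univ i, by omega⟩
    rw [hsum] at this
    simp [Finset.sum_const, Finset.card_univ, Nat.mul_comm] at this
  · have hgt : t < c i := by omega
    have hlb : ∀ j, t ≤ c j := fun j => by have := hpair i j; omega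
    have : ∑ _j : Fin nn, t < ∑ j, c j := by
      apply Finset.sum_lt_sum (fun j _ => hlb j)
      exact ⟨i, Finset.mem_univ i, hgt⟩
    rw [hsum] at this
    simp [Finset.sum_const, Finset.card_univ, Nat.mul_comm] at this

end Generic

section Word

variable {n : ℕ} (w : List (Fin n ⊕ Fin n))

abbrev Vn (n : ℕ) := Fin n ⊕ Fin n

/-- Three copies of the word, to have room for cyclic arguments. -/
def W3 : List (Vn n) := w ++ (w ++ w)

lemma W3_assoc : W3 w = (w ++ w) ++ w := by simp [W3]

lemma length_W3 : (W3 w).length = 3 * w.length := by simp [W3]; ring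

/-- Prefix count. -/
def Pc (v : Vn n) (t : ℕ) : ℤ := (((W3 w).take t).count v : ℤ)

/-- Interval count. -/
def cnt (v : Vn n) (l r : ℕ) : ℤ := Pc w v r - Pc w v l

/-- The pair walk between two left letters. -/
def gg (i j : Fin n) (t : ℕ) : ℤ := Pc w (Sum.inl i) t - Pc w (Sum.inl j) t

/-- `z` is a "middle value" for the pair walk of `i, j`. -/
def MidV (i j : Fin n) (z : ℤ) : Prop := ∀ t : ℕ, |gg w i j t - z| ≤ 1

def slc (l r : ℕ) : List (Vn n) := ((W3 w).take r).drop l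

lemma count_slice {l r : ℕ} (h : l ≤ r) (v : Vn n) :
    ((slc w l r).count v : ℤ) = cnt w v l r := by
  have h1 : (W3 w).take l ++ slc w l r = (W3 w).take r := by
    have : (W3 w).take l = ((W3 w).take r).take l := by
      rw [List.take_take, Nat.min_eq_left h]
    rw [this, slc, List.take_append_drop]
  have h2 := congrArg (List.count v) h1
  rw [List.count_append] at h2
  simp only [cnt, Pc]
  omega

lemma cnt_nonneg {l r : ℕ} (h : l ≤ r) (v : Vn n) : 0 ≤ cnt w v l r := by
  rw [← count_slice w h v]; positivity

lemma cnt_add (v : Vn n) (l m r : ℕ) : cnt w v l r = cnt w v l m + cnt w v m r := by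
  simp only [cnt]; ring

lemma cnt_single_self {q : ℕ} {v : Vn n} (hq : (W3 w)[q]? = some v) :
    cnt w v q (q + 1) = 1 := by
  simp only [cnt, Pc, List.take_succ, hq, Option.toList_some, List.count_append]
  simp

lemma cnt_single_ne {q : ℕ} {v v' : Vn n} (hq : (W3 w)[q]? = some v) (hne : v' ≠ v) :
    cnt w v' q (q + 1) = 0 := by
  simp only [cnt, Pc, List.take_succ, hq, Option.toList_some, List.count_append]
  have h0 : List.count v' [v] = 0 := by
    simp [List.count_singleton, beq_eq_false_iff_ne]
    exact fun h' => hne h'.symm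
  rw [h0]
  simp

lemma pos_of_cnt_pos {l r : ℕ} {v : Vn n} (h : l ≤ r) (hpos : 0 < cnt w v l r) :
    ∃ q, l ≤ q ∧ q < r ∧ (W3 w)[q]? = some v := by
  rw [← count_slice w h v] at hpos
  have hpos' : 0 < (slc w l r).count v := by
    have hc := count_slice w h v; omega
  have hmem : v ∈ slc w l r := List.count_pos_iff.mp hpos'
  obtain ⟨idx, hidx, hval⟩ := List.mem_iff_getElem.mp hmem
  have hidx' : idx < ((W3 w).take r).length - l := by
    simpa [slc] using hidx
  have hlen : l + idx < ((W3 w).take r).length := by omega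
  have hlen2 : l + idx < (W3 w).length := by
    have := hlen; rw [List.length_take] at this; omega
  refine ⟨l + idx, by omega, ?_, ?_⟩
  · have := hlen; rw [List.length_take] at this; omega
  · rw [List.getElem?_eq_getElem hlen2]
    have : ((W3 w).take r)[l + idx] = (W3 w)[l + idx] := List.getElem_take
    rw [← this]
    have h2 : (slc w l r)[idx] = ((W3 w).take r)[l + idx] := List.getElem_drop
    rw [← h2, hval]


section PairFacts

/-- The two-letter filter predicate used in `Alternate`. -/
def pairP (a b : Vn n) : Vn n → Bool := fun z => decide (z = a ∨ z = b)

lemma pairP_left (a b : Vn n) : pairP a b a = true := by simp [pairP]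
lemma pairP_right (a b : Vn n) : pairP a b b = true := by simp [pairP]

lemma mem_of_pairP {a b x : Vn n} (h : pairP a b x = true) : x = a ∨ x = b := by
  simpa [pairP] using h

variable {k : ℕ} {a b : Vn n}

lemma filter_w_altW (hne : a ≠ b) (hab : Alternate w a b)
    (hca : w.count a = k) (hcb : w.count b = k) :
    w.filter (pairP a b) = altW a b (2 * k) ∨ w.filter (pairP a b) = altW b a (2 * k) := by
  set fil := w.filter (pairP a b) with hfil
  have hc : fil.Chain' (· ≠ ·) := hab
  have hm : ∀ x ∈ fil, x = a ∨ x = b := fun x hx => mem_of_pairP (List.of_mem_filter hx)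
  have hcnta : fil.count a = k := by rw [hfil, List.count_filter (pairP_left a b), hca]
  have hcntb : fil.count b = k := by rw [hfil, List.count_filter (pairP_right a b), hcb]
  rcases alt_char hne fil hc hm with h1 | h1
  · left
    have ha' := (count_altW hne fil.length).1
    have hb' := (count_altW hne fil.length).2
    rw [← h1] at ha' hb'
    have : fil.length = 2 * k := by omega
    rw [← this]; exact h1
  · right
    have ha' := (count_altW hne.symm fil.length).1
    have hb' := (count_altW hne.symm fil.length).2
    rw [← h1] at ha' hb'
    have : fil.length = 2 * k := by omega
    rw [← this]; exact h1

lemma filter_W3_chain (hne : a ≠ b) (hab : Alternate w a b)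
    (hca : w.count a = k) (hcb : w.count b = k) :
    ((W3 w).filter (pairP a b)).Chain' (· ≠ ·) := by
  have hsplit : (W3 w).filter (pairP a b) =
      w.filter (pairP a b) ++ (w.filter (pairP a b) ++ w.filter (pairP a b)) := by
    simp [W3, List.filter_append]
  rcases filter_w_altW w hne hab hca hcb with h1 | h1
  · rw [hsplit, h1]
    have e1 : altW a b (2*k) ++ altW a b (2*k) = altW a b (2*k + 2*k) :=
      (altW_append_even a b k (2*k)).symm
    have e2 : altW a b (2*k) ++ altW a b (2*k + 2*k) = altW a b (2*k + (2*k + 2*k)) :=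
      (altW_append_even a b k (2*k + 2*k)).symm
    rw [e1, e2]
    exact chain'_altW hne _
  · rw [hsplit, h1]
    have e1 : altW b a (2*k) ++ altW b a (2*k) = altW b a (2*k + 2*k) :=
      (altW_append_even b a k (2*k)).symm
    have e2 : altW b a (2*k) ++ altW b a (2*k + 2*k) = altW b a (2*k + (2*k + 2*k)) :=
      (altW_append_even b a k (2*k + 2*k)).symm
    rw [e1, e2]
    exact chain'_altW hne.symm _

lemma slice_isInfix (l r : ℕ) : slc w l r <:+: W3 w := by
  have h1 : slc w l r <:+ (W3 w).take r := List.drop_suffix _ _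
  exact h1.isInfix.trans (List.take_prefix r (W3 w)).isInfix

lemma slice_filter_chain (hne : a ≠ b) (hab : Alternate w a b)
    (hca : w.count a = k) (hcb : w.count b = k) (l r : ℕ) :
    ((slc w l r).filter (pairP a b)).Chain' (· ≠ ·) :=
  (filter_W3_chain w hne hab hca hcb).infix
    (List.IsInfix.filter (pairP a b) (slice_isInfix w l r))

lemma slice_filter_mem (l r : ℕ) :
    ∀ x ∈ (slc w l r).filter (pairP a b), x = a ∨ x = b :=
  fun x hx => mem_of_pairP (List.of_mem_filter hx)

/-- General balance of any interval, for an alternating pair. -/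
lemma pair_le (hne : a ≠ b) (hab : Alternate w a b)
    (hca : w.count a = k) (hcb : w.count b = k) {l r : ℕ} (h : l ≤ r) :
    cnt w a l r ≤ cnt w b l r + 1 := by
  have hc := slice_filter_chain w hne hab hca hcb l r
  have hm := slice_filter_mem w (a := a) (b := b) l r
  have hle := alt_count_le hne hc hm
  rw [List.count_filter (pairP_left a b), List.count_filter (pairP_right a b)] at hle
  have h1 := count_slice w h a
  have h2 := count_slice w h b
  omega

/-- Interval starting at an occurrence of `b`. -/
lemma pair_start (hne : a ≠ b) (hab : Alternate w a b)
    (hca : w.count a = k) (hcb : w.count b = k) {q r : ℕ}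
    (hq : (W3 w)[q]? = some b) (h : q ≤ r) :
    cnt w a q r ≤ cnt w b q r := by
  rcases Nat.eq_or_lt_of_le h with rfl | hlt
  · simp [cnt]
  obtain ⟨hqlen, hval⟩ := List.getElem?_eq_some_iff.mp hq
  have hlt' : q < ((W3 w).take r).length := by
    rw [List.length_take]; exact Nat.lt_min.mpr ⟨hlt, hqlen⟩
  have hdrop : slc w q r = b :: ((W3 w).take r).drop (q + 1) := by
    rw [slc, List.drop_eq_getElem_cons hlt', List.getElem_take, hval]
  have hσ : (slc w q r).filter (pairP a b)
      = b :: (((W3 w).take r).drop (q + 1)).filter (pairP a b) := by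
    rw [hdrop, List.filter_cons_of_pos (pairP_right a b)]
  have hc := slice_filter_chain w hne hab hca hcb q r
  have hm := slice_filter_mem w (a := a) (b := b) q r
  have hh : ((slc w q r).filter (pairP a b)).head? = some b := by rw [hσ]; rfl
  have hle := alt_count_head hne hc hm hh
  rw [List.count_filter (pairP_left a b), List.count_filter (pairP_right a b)] at hle
  have h1 := count_slice w h a
  have h2 := count_slice w h b
  omega

/-- Interval ending just before an occurrence of `b`. -/
lemma pair_stop (hne : a ≠ b) (hab : Alternate w a b)
    (hca : w.count a = k) (hcb : w.count b = k) {l q : ℕ}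
    (hq : (W3 w)[q]? = some b) (h : l ≤ q) :
    cnt w b l q ≤ cnt w a l q := by
  obtain ⟨hqlen, hval⟩ := List.getElem?_eq_some_iff.mp hq
  have htake : (W3 w).take (q + 1) = (W3 w).take q ++ [b] := by
    rw [List.take_succ, hq]; rfl
  have hlen : l ≤ ((W3 w).take q).length := by
    rw [List.length_take]; exact le_min h (h.trans (le_of_lt hqlen))
  have hsl : slc w l (q + 1) = slc w l q ++ [b] := by
    rw [slc, htake, List.drop_append_of_le_length hlen]; rfl
  have hc := slice_filter_chain w hne hab hca hcb l (q + 1)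
  have hm := slice_filter_mem w (a := a) (b := b) l (q + 1)
  have hm' : ∀ x ∈ (slc w l (q+1)).filter (pairP a b), x = b ∨ x = a :=
    fun x hx => (hm x hx).symm
  have hle := alt_count_le hne.symm hc hm'
  rw [List.count_filter (pairP_left a b), List.count_filter (pairP_right a b)] at hle
  have hca' : (slc w l (q+1)).count a = (slc w l q).count a := by
    rw [hsl, List.count_append]
    have : List.count a [b] = 0 := by
      simp [List.count_singleton, beq_eq_false_iff_ne]
      exact fun h' => hne h'.symm
    omega
  have hcb' : (slc w l (q+1)).count b = (slc w l q).count b + 1 := by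
    rw [hsl, List.count_append]
    simp
  have h1 := count_slice w h a
  have h2 := count_slice w h b
  omega

end PairFacts


section MidFacts

variable {k : ℕ}

/-- Symmetric version of `pair_le`. -/
lemma pair_ge {a b : Vn n} (hne : a ≠ b) (hab : Alternate w a b)
    (hca : w.count a = k) (hcb : w.count b = k) {l r : ℕ} (h : l ≤ r) :
    cnt w b l r ≤ cnt w a l r + 1 := by
  have hc := slice_filter_chain w hne hab hca hcb l r
  have hm := slice_filter_mem w (a := a) (b := b) l r
  have hm' : ∀ x ∈ (slc w l r).filter (pairP a b), x = b ∨ x = a :=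
    fun x hx => (hm x hx).symm
  have hle := alt_count_le hne.symm hc hm'
  rw [List.count_filter (pairP_left a b), List.count_filter (pairP_right a b)] at hle
  have h1 := count_slice w h a
  have h2 := count_slice w h b
  omega

lemma gg_sub (i j : Fin n) (t s : ℕ) :
    gg w i j s - gg w i j t = cnt w (Sum.inl i) t s - cnt w (Sum.inl j) t s := by
  simp only [gg, cnt]; ring

lemma midv_at_y (hk : IsUniform w k)
    (hAlt : ∀ i j : Fin n, i ≠ j → Alternate w (Sum.inl i) (Sum.inr j))
    {i j s : Fin n} (hsi : s ≠ i) (hsj : s ≠ j) {p : ℕ}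
    (hp : (W3 w)[p]? = some (Sum.inr s)) : MidV w i j (gg w i j p) := by
  have hnei : (Sum.inl i : Vn n) ≠ Sum.inr s := by simp
  have hnej : (Sum.inl j : Vn n) ≠ Sum.inr s := by simp
  have habi : Alternate w (Sum.inl i) (Sum.inr s) := hAlt i s (Ne.symm hsi)
  have habj : Alternate w (Sum.inl j) (Sum.inr s) := hAlt j s (Ne.symm hsj)
  intro t
  rw [abs_le]
  rcases le_total p t with hpt | htp
  · have hsub := gg_sub w i j p t
    have h1 := pair_start w hnei habi (hk _) (hk _) hp hpt
    have h2 := pair_ge w hnej habj (hk _) (hk _) hpt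
    have h3 := pair_start w hnej habj (hk _) (hk _) hp hpt
    have h4 := pair_ge w hnei habi (hk _) (hk _) hpt
    omega
  · have hsub := gg_sub w i j t p
    have h1 := pair_stop w hnei habi (hk _) (hk _) hp htp
    have h2 := pair_le w hnej habj (hk _) (hk _) htp
    have h3 := pair_stop w hnej habj (hk _) (hk _) hp htp
    have h4 := pair_le w hnei habi (hk _) (hk _) htp
    omega

lemma midv_unique {i j : Fin n} (hij : i ≠ j)
    (hNA : ¬ Alternate w (Sum.inl i) (Sum.inl j))
    {z z' : ℤ} (h1 : MidV w i j z) (h2 : MidV w i j z') : z = z' := by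
  have hneij : (Sum.inl i : Vn n) ≠ Sum.inl j := by simp [hij]
  obtain ⟨u, c, mid, rest, hw, hpc, hmf⟩ :=
    not_chain'_filter (pairP (Sum.inl i) (Sum.inl j)) w hNA
  set v := u.length with hv
  set v' := u.length + 1 + mid.length with hv'
  have hwlen : w.length = u.length + 1 + mid.length + 1 + rest.length := by
    rw [hw]; simp; omega
  have htake1 : (W3 w).take v = u := by
    show (w ++ (w ++ w)).take v = u
    rw [List.take_append_of_le_length (by omega), hw]
    exact List.take_left' rfl
  have htake2 : (W3 w).take (v' + 1) = u ++ (c :: (mid ++ [c])) := by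
    show (w ++ (w ++ w)).take (v' + 1) = _
    rw [List.take_append_of_le_length (by omega), hw]
    have hassoc : u ++ (c :: (mid ++ c :: rest)) = (u ++ (c :: (mid ++ [c]))) ++ rest := by
      simp
    rw [hassoc]
    apply List.take_left'
    simp [hv']
    omega
  have key : ∀ x : Vn n, cnt w x v (v' + 1) = (List.count x (c :: (mid ++ [c])) : ℤ) := by
    intro x
    simp only [cnt, Pc, htake1, htake2, List.count_append]
    push_cast
    ring
  have hnotmid : ∀ x : Vn n, pairP (Sum.inl i) (Sum.inl j) x = true → x ∉ mid := by
    intro x hx hmem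
    exact List.filter_eq_nil_iff.mp hmf x hmem hx
  have hcnti : List.count (Sum.inl i : Vn n) mid = 0 :=
    List.count_eq_zero.mpr (hnotmid _ (pairP_left _ _))
  have hcntj : List.count (Sum.inl j : Vn n) mid = 0 :=
    List.count_eq_zero.mpr (hnotmid _ (pairP_right _ _))
  have habs1 := h1 v
  have habs2 := h1 (v' + 1)
  have habs3 := h2 v
  have habs4 := h2 (v' + 1)
  rw [abs_le] at habs1 habs2 habs3 habs4
  have hsub := gg_sub w i j v (v' + 1)
  rcases mem_of_pairP hpc with rfl | rfl
  · have e1 : cnt w (Sum.inl i) v (v' + 1) = 2 := by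
      rw [key, List.count_cons_self, List.count_append, hcnti]
      simp
    have e2 : cnt w (Sum.inl j) v (v' + 1) = 0 := by
      rw [key, List.count_cons_of_ne hneij, List.count_append, hcntj]
      have : List.count (Sum.inl j : Vn n) [Sum.inl i] = 0 := by
        simp [List.count_singleton, beq_eq_false_iff_ne]
        intro h'
        first
        | exact hij h'
        | exact hij h'.symm
      rw [this]
      simp
    omega
  · have e1 : cnt w (Sum.inl j) v (v' + 1) = 2 := by
      rw [key, List.count_cons_self, List.count_append, hcntj]
      simp
    have e2 : cnt w (Sum.inl i) v (v' + 1) = 0 := by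
      rw [key, List.count_cons_of_ne hneij.symm, List.count_append, hcnti]
      have : List.count (Sum.inl i : Vn n) [Sum.inl j] = 0 := by
        simp [List.count_singleton, beq_eq_false_iff_ne]
        intro h'
        first
        | exact hij h'
        | exact hij h'.symm
      rw [this]
      simp
    omega

end MidFacts

section Periodic

variable {k : ℕ}

/-- Between two occurrences of `Y m`, every other left letter appears exactly as
often as `Y m` itself. -/
lemma cnt_eq_y (hk : IsUniform w k)
    (hAlt : ∀ i j : Fin n, i ≠ j → Alternate w (Sum.inl i) (Sum.inr j))
    {j m : Fin n} (hjm : j ≠ m) {q q' : ℕ}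
    (hq : (W3 w)[q]? = some (Sum.inr m)) (hq' : (W3 w)[q']? = some (Sum.inr m))
    (h : q ≤ q') : cnt w (Sum.inl j) q q' = cnt w (Sum.inr m) q q' := by
  have hne : (Sum.inl j : Vn n) ≠ Sum.inr m := by simp
  have hab : Alternate w (Sum.inl j) (Sum.inr m) := hAlt j m hjm
  exact le_antisymm (pair_start w hne hab (hk _) (hk _) hq h)
    (pair_stop w hne hab (hk _) (hk _) hq' h)

lemma Pc_period {v : Vn n} (hcv : w.count v = k) {t : ℕ} (ht : t ≤ 2 * w.length) :
    Pc w v (w.length + t) = Pc w v t + k := by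
  have h1 : (W3 w).take (w.length + t) = w ++ (w ++ w).take t := by
    show (w ++ (w ++ w)).take (w.length + t) = _
    rw [List.take_append, List.take_of_length_le (by omega)]
    congr 2
    omega
  have h2 : (W3 w).take t = (w ++ w).take t := by
    rw [W3_assoc]
    rw [List.take_append_of_le_length (by simp; omega)]
  simp only [Pc, h1, h2, List.count_append, hcv]
  push_cast
  ring

lemma getElem_period {q : ℕ} (hq : q < 2 * w.length) :
    (W3 w)[q + w.length]? = (W3 w)[q]? := by
  have h1 : (W3 w)[q + w.length]? = (w ++ w)[q]? := by
    show (w ++ (w ++ w))[q + w.length]? = _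
    rw [List.getElem?_append_right (by omega)]
    congr 1
    omega
  have h2 : (W3 w)[q]? = (w ++ w)[q]? := by
    rw [W3_assoc]
    rw [List.getElem?_append_left (by simp; omega)]
  rw [h1, h2]

lemma exists_pos {v : Vn n} (hv : v ∈ w) : ∃ q, q < w.length ∧ (W3 w)[q]? = some v := by
  obtain ⟨idx, hidx, hval⟩ := List.mem_iff_getElem.mp hv
  refine ⟨idx, hidx, ?_⟩
  show (w ++ (w ++ w))[idx]? = some v
  rw [List.getElem?_append_left hidx, List.getElem?_eq_getElem hidx, hval]

/-- Reduce a position to the first period, preserving the letter and walks. -/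
lemma reduce_pos (hk : IsUniform w k) {v : Vn n} {q : ℕ} (hq3 : q < 3 * w.length)
    (hq : (W3 w)[q]? = some v) :
    ∃ q', q' < w.length ∧ (W3 w)[q']? = some v ∧ ∀ i j : Fin n, gg w i j q' = gg w i j q := by
  have hper : ∀ q'' , q'' + w.length ≤ 3 * w.length → (∀ i j : Fin n,
      gg w i j (q'' + w.length) = gg w i j q'') := by
    intro q'' hq'' i j
    have e1 := Pc_period w (hk (Sum.inl i)) (t := q'') (by omega)
    have e2 := Pc_period w (hk (Sum.inl j)) (t := q'') (by omega)
    simp only [gg]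
    rw [Nat.add_comm q'' w.length, e1, e2]
    ring
  rcases Nat.lt_or_ge q w.length with h1 | h1
  · exact ⟨q, h1, hq, fun i j => rfl⟩
  rcases Nat.lt_or_ge q (2 * w.length) with h2 | h2
  · refine ⟨q - w.length, by omega, ?_, ?_⟩
    · rw [← getElem_period w (by omega)]
      have : q - w.length + w.length = q := by omega
      rw [this, hq]
    · intro i j
      have := hper (q - w.length) (by omega) i j
      have he : q - w.length + w.length = q := by omega
      rw [he] at this
      exact this.symm
  · refine ⟨q - 2 * w.length, by omega, ?_, ?_⟩
    · have e1 : (W3 w)[q - 2 * w.length]? = (W3 w)[q - w.length]? := by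
        rw [← getElem_period w (by omega)]
        congr 1
        omega
      have e2 : (W3 w)[q - w.length]? = (W3 w)[q]? := by
        rw [← getElem_period w (by omega)]
        congr 1
        omega
      rw [e1, e2, hq]
    · intro i j
      have ha := hper (q - 2 * w.length) (by omega) i j
      have hb := hper (q - w.length) (by omega) i j
      have he1 : q - 2 * w.length + w.length = q - w.length := by omega
      have he2 : q - w.length + w.length = q := by omega
      rw [he1] at ha
      rw [he2] at hb
      omega

end Periodic

section Main

lemma exists_ne2 (hn : 3 ≤ n) (x y : Fin n) : ∃ z : Fin n, z ≠ x ∧ z ≠ y := by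
  by_contra h
  push_neg at h
  have hsub : (Finset.univ : Finset (Fin n)) ⊆ {x, y} := by
    intro z _
    rcases eq_or_ne z x with rfl | hzx
    · simp
    · have := h z hzx
      simp [this]
  have hcard := Finset.card_le_card hsub
  rw [Finset.card_univ, Fintype.card_fin] at hcard
  have h2 : ({x, y} : Finset (Fin n)).card ≤ 2 :=
    (Finset.card_insert_le _ _).trans (by simp)
  omega

lemma exists_ne3 (hn : 4 ≤ n) (x y u : Fin n) : ∃ z : Fin n, z ≠ x ∧ z ≠ y ∧ z ≠ u := by
  by_contra h
  push_neg at h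
  have hsub : (Finset.univ : Finset (Fin n)) ⊆ {x, y, u} := by
    intro z _
    rcases eq_or_ne z x with rfl | hzx
    · simp
    rcases eq_or_ne z y with rfl | hzy
    · simp
    have := h z hzx hzy
    simp [this]
  have hcard := Finset.card_le_card hsub
  rw [Finset.card_univ, Fintype.card_fin] at hcard
  have h2 : ({x, y, u} : Finset (Fin n)).card ≤ 3 := by
    have ha := Finset.card_insert_le x ({y, u} : Finset (Fin n))
    have hb := Finset.card_insert_le y ({u} : Finset (Fin n))
    have hc : ({u} : Finset (Fin n)).card = 1 := Finset.card_singleton u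
    omega
  omega

lemma exists_good_cut (hn : 4 ≤ n) {k : ℕ} (hk : IsUniform w k)
    (hmem : ∀ v : Vn n, v ∈ w)
    (hAlt : ∀ i j : Fin n, i ≠ j → Alternate w (Sum.inl i) (Sum.inr j))
    (hNAll : ∀ i j : Fin n, i ≠ j → ¬ Alternate w (Sum.inl i) (Sum.inl j))
    (hNAy : ∀ i : Fin n, ¬ Alternate w (Sum.inl i) (Sum.inr i)) :
    ∃ q, q < w.length ∧ ∀ i j : Fin n, i ≠ j → MidV w i j (gg w i j q) := by
  have h0 : 0 < n := by omega
  set N := w.length with hNdef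
  have hN1 : 1 ≤ N := List.length_pos_iff.mpr (List.ne_nil_of_mem (hmem (Sum.inr ⟨0, h0⟩)))
  set m : Fin n := ⟨0, h0⟩ with hmdef
  set j₀ : Fin n := ⟨1, by omega⟩ with hj₀def
  have hmj₀ : j₀ ≠ m := by
    intro h
    rw [hj₀def, hmdef, Fin.mk.injEq] at h
    omega
  -- middle values for all pairs (m, j)
  have hμex : ∀ j : Fin n, j ≠ m → ∃ z, MidV w m j z := by
    intro j hj
    obtain ⟨s', hs1, hs2⟩ := exists_ne2 (by omega) m j
    obtain ⟨p, hpN, hp⟩ := exists_pos w (hmem (Sum.inr s'))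
    exact ⟨gg w m j p, midv_at_y w hk hAlt hs1 hs2 hp⟩
  choose μ hμmid using hμex
  -- independence of the distance to the middle over the choice of j
  have h_indep : ∀ (j : Fin n) (hj : j ≠ m), ∀ q : ℕ, (W3 w)[q]? = some (Sum.inr m) →
      gg w m j q - μ j hj = gg w m j₀ q - μ j₀ hmj₀ := by
    intro j hj q hq
    by_cases hjj0 : j = j₀
    · subst hjj0; rfl
    obtain ⟨s', hs1, hs2, hs3⟩ := exists_ne3 hn m j j₀
    obtain ⟨p, hpN, hp⟩ := exists_pos w (hmem (Sum.inr s'))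
    have he1 : μ j hj = gg w m j p :=
      midv_unique w (Ne.symm hj) (hNAll m j (Ne.symm hj)) (hμmid j hj)
        (midv_at_y w hk hAlt hs1 hs2 hp)
    have he2 : μ j₀ hmj₀ = gg w m j₀ p :=
      midv_unique w (Ne.symm hmj₀) (hNAll m j₀ (Ne.symm hmj₀)) (hμmid j₀ hmj₀)
        (midv_at_y w hk hAlt hs1 hs3 hp)
    have hj₀j : j₀ ≠ j := fun h => hjj0 h.symm
    have he3 : gg w j₀ j q = gg w j₀ j p :=
      midv_unique w hj₀j (hNAll j₀ j hj₀j)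
        (midv_at_y w hk hAlt (Ne.symm hmj₀) (Ne.symm hj) hq)
        (midv_at_y w hk hAlt hs3 hs2 hp)
    rw [he1, he2]
    simp only [gg] at he3 ⊢
    omega
  have hDbound : ∀ q : ℕ, |gg w m j₀ q - μ j₀ hmj₀| ≤ 1 := hμmid j₀ hmj₀
  set S : Finset ℕ :=
    (Finset.range (3 * N)).filter (fun t => (W3 w)[t]? = some (Sum.inr m)) with hSdef
  have hSmem : ∀ x : ℕ, x ∈ S ↔ (x < 3 * N ∧ (W3 w)[x]? = some (Sum.inr m)) := by
    intro x
    rw [hSdef, Finset.mem_filter, Finset.mem_range]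
  by_cases hzero : ∃ q ∈ S, gg w m j₀ q - μ j₀ hmj₀ = 0
  · obtain ⟨q, hqS, hD0⟩ := hzero
    obtain ⟨hq3, hqget⟩ := (hSmem q).mp hqS
    obtain ⟨q', hq'N, hq'get, hq'gg⟩ := reduce_pos w hk hq3 hqget
    refine ⟨q', hq'N, ?_⟩
    intro i j hij
    rw [hq'gg i j]
    by_cases him : i = m
    · subst him
      have hjm : j ≠ m := Ne.symm hij
      have h1 := h_indep j hjm q hqget
      have h2 : gg w m j q = μ j hjm := by omega
      rw [h2]
      exact hμmid j hjm
    by_cases hjm : j = m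
    · subst hjm
      have him' : i ≠ m := him
      have h1 := h_indep i him' q hqget
      have h2 : gg w m i q = μ i him' := by omega
      intro t
      have hb := hμmid i him' t
      rw [abs_le] at hb ⊢
      simp only [gg] at h2 hb ⊢
      omega
    · exact midv_at_y w hk hAlt (fun h => him h.symm) (fun h => hjm h.symm) hqget
  · push_neg at hzero
    exfalso
    have hval : ∀ q ∈ S, gg w m j₀ q - μ j₀ hmj₀ = 1 ∨ gg w m j₀ q - μ j₀ hmj₀ = -1 := by
      intro q hq
      have h1 := hDbound q
      have h2 := hzero q hq
      rw [abs_le] at h1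
      omega
    have hdiff : ∀ q ∈ S, ∀ q' ∈ S, q ≤ q' →
        (gg w m j₀ q' - μ j₀ hmj₀) - (gg w m j₀ q - μ j₀ hmj₀)
          = cnt w (Sum.inl m) q q' - cnt w (Sum.inr m) q q' := by
      intro q hq q' hq' hle
      obtain ⟨_, hqget⟩ := (hSmem q).mp hq
      obtain ⟨_, hq'get⟩ := (hSmem q').mp hq'
      have h1 := gg_sub w m j₀ q q'
      have h2 := cnt_eq_y w hk hAlt hmj₀ hqget hq'get hle
      omega
    -- step 1: D is constant on S
    have hkey : ∀ qa ∈ S, ∀ qb ∈ S, gg w m j₀ qa - μ j₀ hmj₀ = 1 →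
        gg w m j₀ qb - μ j₀ hmj₀ = -1 → False := by
      intro qa hqa qb hqb hDa hDb
      obtain ⟨hqa3, hqaget⟩ := (hSmem qa).mp hqa
      obtain ⟨hqb3, hqbget⟩ := (hSmem qb).mp hqb
      obtain ⟨qa', haN, haget, hagg⟩ := reduce_pos w hk hqa3 hqaget
      obtain ⟨qb', hbN, hbget, hbgg⟩ := reduce_pos w hk hqb3 hqbget
      have hDa' : gg w m j₀ qa' - μ j₀ hmj₀ = 1 := by rw [hagg]; omega
      have hDb' : gg w m j₀ qb' - μ j₀ hmj₀ = -1 := by rw [hbgg]; omega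
      set qb'' := qb' + N with hqb''def
      have hb''get : (W3 w)[qb'']? = some (Sum.inr m) := by
        rw [hqb''def, getElem_period w (by omega), hbget]
      have hb''gg : ∀ i j : Fin n, gg w i j qb'' = gg w i j qb' := by
        intro i j
        have e1 := Pc_period w (hk (Sum.inl i)) (t := qb') (by omega)
        have e2 := Pc_period w (hk (Sum.inl j)) (t := qb') (by omega)
        simp only [gg, hqb''def]
        rw [Nat.add_comm qb' N, e1, e2]
        ring
      have hDb'' : gg w m j₀ qb'' - μ j₀ hmj₀ = -1 := by rw [hb''gg]; omega
      have haS : qa' ∈ S := (hSmem qa').mpr ⟨by omega, haget⟩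
      have hbS : qb'' ∈ S := (hSmem qb'').mpr ⟨by omega, hb''get⟩
      have hab : qa' < qb'' := by omega
      set T : Finset ℕ := S.filter (fun x => gg w m j₀ x - μ j₀ hmj₀ = -1 ∧ qa' < x) with hTdef
      have hTne : T.Nonempty := ⟨qb'', Finset.mem_filter.mpr ⟨hbS, hDb'', hab⟩⟩
      set qs := T.min' hTne with hqsdef
      obtain ⟨hqsS, hqsD, hqsgt⟩ := Finset.mem_filter.mp (T.min'_mem hTne)
      set U : Finset ℕ := S.filter
        (fun x => gg w m j₀ x - μ j₀ hmj₀ = 1 ∧ qa' ≤ x ∧ x < qs) with hUdef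
      have hUne : U.Nonempty := ⟨qa', Finset.mem_filter.mpr ⟨haS, hDa', le_refl _, hqsgt⟩⟩
      set qf := U.max' hUne with hqfdef
      obtain ⟨hqfS, hqfD, hqfge, hqflt⟩ := Finset.mem_filter.mp (U.max'_mem hUne)
      obtain ⟨hqf3, hqfget⟩ := (hSmem qf).mp hqfS
      obtain ⟨hqs3, hqsget⟩ := (hSmem qs).mp hqsS
      have hfs : qf < qs := hqflt
      have hcnt1 : cnt w (Sum.inr m) qf qs = 1 := by
        have hsingle := cnt_single_self w hqfget
        have hsplit := cnt_add w (Sum.inr m) qf (qf + 1) qs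
        have hnn := cnt_nonneg w (l := qf + 1) (r := qs) (by omega) (Sum.inr m)
        have hle1 : cnt w (Sum.inr m) qf qs ≤ 1 := by
          by_contra hgt
          push_neg at hgt
          have hpos : 0 < cnt w (Sum.inr m) (qf + 1) qs := by omega
          obtain ⟨r, hr1, hr2, hrget⟩ := pos_of_cnt_pos w (by omega) hpos
          have hrS : r ∈ S := (hSmem r).mpr ⟨by omega, hrget⟩
          rcases hval r hrS with hv1 | hv1
          · have := U.le_max' r (Finset.mem_filter.mpr ⟨hrS, hv1, by omega, by omega⟩)
            omega
          · have := T.min'_le r (Finset.mem_filter.mpr ⟨hrS, hv1, by omega⟩)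
            omega
        omega
      have hd := hdiff qf hqfS qs hqsS (le_of_lt hfs)
      have hnn2 := cnt_nonneg w (l := qf) (r := qs) (le_of_lt hfs) (Sum.inl m)
      linarith [hd, hnn2, hcnt1, hqfD, hqsD]
    have hconst : ∀ q ∈ S, ∀ q' ∈ S,
        gg w m j₀ q - μ j₀ hmj₀ = gg w m j₀ q' - μ j₀ hmj₀ := by
      intro q hq q' hq'
      rcases hval q hq with h1 | h1 <;> rcases hval q' hq' with h2 | h2 <;>
        first
          | omega
          | (exact absurd (hkey q hq q' hq' h1 h2) (fun h => h))
          | (exact absurd (hkey q' hq' q hq h2 h1) (fun h => h))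
    have hEq : ∀ q ∈ S, ∀ q' ∈ S, q ≤ q' →
        cnt w (Sum.inl m) q q' = cnt w (Sum.inr m) q q' := by
      intro q hq q' hq' hle
      have h1 := hdiff q hq q' hq' hle
      have h2 := hconst q hq q' hq'
      omega
    -- contradiction with x_m, y_m being non-alternating
    obtain ⟨u, c, mid, rest, hw, hpc, hmf⟩ :=
      not_chain'_filter (pairP (Sum.inl m) (Sum.inr m)) w (hNAy m)
    have hwlen : N = u.length + 1 + mid.length + 1 + rest.length := by
      rw [hNdef, hw]; simp; omega
    set v := u.length with hvdef
    set v' := u.length + 1 + mid.length with hv'def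
    have htake1 : (W3 w).take v = u := by
      show (w ++ (w ++ w)).take v = u
      rw [List.take_append_of_le_length (by omega), hw]
      exact List.take_left' rfl
    have htake2 : (W3 w).take v' = u ++ (c :: mid) := by
      show (w ++ (w ++ w)).take v' = _
      rw [List.take_append_of_le_length (by omega), hw]
      have hassoc : u ++ (c :: (mid ++ c :: rest)) = (u ++ (c :: mid)) ++ (c :: rest) := by
        simp
      rw [hassoc]
      apply List.take_left'
      simp [hv'def]
      omega
    have htake3 : (W3 w).take (v' + 1) = u ++ (c :: (mid ++ [c])) := by
      show (w ++ (w ++ w)).take (v' + 1) = _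
      rw [List.take_append_of_le_length (by omega), hw]
      have hassoc : u ++ (c :: (mid ++ c :: rest)) = (u ++ (c :: (mid ++ [c]))) ++ rest := by
        simp
      rw [hassoc]
      apply List.take_left'
      simp [hv'def]
      omega
    have keyA : ∀ x : Vn n, cnt w x v v' = (List.count x (c :: mid) : ℤ) := by
      intro x
      simp only [cnt, Pc, htake1, htake2, List.count_append]
      push_cast
      ring
    have keyB : ∀ x : Vn n, cnt w x v (v' + 1) = (List.count x (c :: (mid ++ [c])) : ℤ) := by
      intro x
      simp only [cnt, Pc, htake1, htake3, List.count_append]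
      push_cast
      ring
    have hnotmid : ∀ x : Vn n, pairP (Sum.inl m) (Sum.inr m) x = true → x ∉ mid := by
      intro x hx hmem'
      exact List.filter_eq_nil_iff.mp hmf x hmem' hx
    have hcnti : List.count (Sum.inl m : Vn n) mid = 0 :=
      List.count_eq_zero.mpr (hnotmid _ (pairP_left _ _))
    have hcntj : List.count (Sum.inr m : Vn n) mid = 0 :=
      List.count_eq_zero.mpr (hnotmid _ (pairP_right _ _))
    have hget1 : (W3 w)[v]? = some c := by
      show (w ++ (w ++ w))[v]? = some c
      rw [List.getElem?_append_left (by omega), hw,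
        List.getElem?_append_right (le_refl u.length)]
      simp
    have hget2 : (W3 w)[v']? = some c := by
      show (w ++ (w ++ w))[v']? = some c
      have hw2 : w = (u ++ (c :: mid)) ++ (c :: rest) := by rw [hw]; simp
      rw [List.getElem?_append_left (by omega), hw2]
      have hlen2 : (u ++ (c :: mid)).length = v' := by simp [hv'def]; omega
      rw [← hlen2, List.getElem?_append_right (le_refl _)]
      simp
    rcases mem_of_pairP hpc with rfl | rfl
    · -- c = X m : use the shifted copy
      have hvN : v + N < 2 * N := by omega
      have hv'N : v' + N < 2 * N := by omega
      have hgets1 : (W3 w)[v + N]? = some (Sum.inl m) := by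
        rw [getElem_period w (by omega), hget1]
      have hgets2 : (W3 w)[v' + N]? = some (Sum.inl m) := by
        rw [getElem_period w (by omega), hget2]
      have hshift : ∀ x : Vn n, ∀ a b : ℕ, a ≤ 2 * N → b ≤ 2 * N →
          cnt w x (a + N) (b + N) = cnt w x a b := by
        intro x a bb ha hb
        simp only [cnt]
        rw [Nat.add_comm a N, Nat.add_comm bb N,
          Pc_period w (hk x) ha, Pc_period w (hk x) hb]
        ring
      obtain ⟨p0, hp0N, hp0get⟩ := exists_pos w (hmem (Sum.inr m))
      have hp0S : p0 ∈ S := (hSmem p0).mpr ⟨by omega, hp0get⟩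
      set A : Finset ℕ := S.filter (fun x => x ≤ v + N) with hAdef
      have hAne : A.Nonempty := ⟨p0, Finset.mem_filter.mpr ⟨hp0S, by omega⟩⟩
      set qL := A.max' hAne with hqLdef
      obtain ⟨hqLS, hqLle⟩ := Finset.mem_filter.mp (A.max'_mem hAne)
      obtain ⟨hqL3, hqLget⟩ := (hSmem qL).mp hqLS
      have hp2get : (W3 w)[p0 + N + N]? = some (Sum.inr m) := by
        rw [getElem_period w (by omega), getElem_period w (by omega), hp0get]
      have hp2S : p0 + N + N ∈ S := (hSmem _).mpr ⟨by omega, hp2get⟩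
      set B : Finset ℕ := S.filter (fun x => v' + N < x) with hBdef
      have hBne : B.Nonempty := ⟨p0 + N + N, Finset.mem_filter.mpr ⟨hp2S, by omega⟩⟩
      set qR := B.min' hBne with hqRdef
      obtain ⟨hqRS, hqRgt⟩ := Finset.mem_filter.mp (B.min'_mem hBne)
      obtain ⟨hqR3, hqRget⟩ := (hSmem qR).mp hqRS
      have hmidcnt0 : cnt w (Sum.inr m) (v + N) (v' + N + 1) = 0 := by
        have : v' + N + 1 = (v' + 1) + N := by omega
        rw [this, hshift _ _ _ (by omega) (by omega), keyB]
        rw [List.count_cons_of_ne (by simp), List.count_append, hcntj]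
        have : List.count (Sum.inr m : Vn n) [Sum.inl m] = 0 := by
          simp [List.count_singleton, beq_eq_false_iff_ne]
        rw [this]
        simp
      have hmidcnt2 : cnt w (Sum.inl m) (v + N) (v' + N + 1) = 2 := by
        have : v' + N + 1 = (v' + 1) + N := by omega
        rw [this, hshift _ _ _ (by omega) (by omega), keyB]
        rw [List.count_cons_self, List.count_append, hcnti]
        simp
      have hcnt1 : cnt w (Sum.inr m) qL qR = 1 := by
        have hsingle := cnt_single_self w hqLget
        have hsplit := cnt_add w (Sum.inr m) qL (qL + 1) qR
        have hnn := cnt_nonneg w (l := qL + 1) (r := qR) (by omega) (Sum.inr m)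
        have hle1 : cnt w (Sum.inr m) qL qR ≤ 1 := by
          by_contra hgt
          push_neg at hgt
          have hpos : 0 < cnt w (Sum.inr m) (qL + 1) qR := by omega
          obtain ⟨r, hr1, hr2, hrget⟩ := pos_of_cnt_pos w (by omega) hpos
          have hrS : r ∈ S := (hSmem r).mpr ⟨by omega, hrget⟩
          rcases Nat.lt_or_ge (v + N) r with hc1 | hc1
          · rcases Nat.lt_or_ge (v' + N) r with hc2 | hc2
            · have := B.min'_le r (Finset.mem_filter.mpr ⟨hrS, hc2⟩)
              omega
            · -- v + N < r ≤ v' + N : contradiction with zero count inside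
              have hrsingle := cnt_single_self w hrget
              have hs1 := cnt_add w (Sum.inr m) (v + N) r (v' + N + 1)
              have hs2 := cnt_add w (Sum.inr m) r (r + 1) (v' + N + 1)
              have hn1 := cnt_nonneg w (l := v + N) (r := r) (by omega) (Sum.inr m)
              have hn2 := cnt_nonneg w (l := r + 1) (r := v' + N + 1) (by omega) (Sum.inr m)
              omega
          · have := A.le_max' r (Finset.mem_filter.mpr ⟨hrS, hc1⟩)
            omega
        omega
      have hcnt2 : cnt w (Sum.inl m) qL qR ≥ 2 := by
        have hs1 := cnt_add w (Sum.inl m) qL (v + N) qR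
        have hs2 := cnt_add w (Sum.inl m) (v + N) (v' + N + 1) qR
        have hn1 := cnt_nonneg w (l := qL) (r := v + N) hqLle (Sum.inl m)
        have hn2 := cnt_nonneg w (l := v' + N + 1) (r := qR) (by omega) (Sum.inl m)
        omega
      have := hEq qL hqLS qR hqRS (by omega)
      omega
    · -- c = Y m : the two occurrences v, v' are both in S
      have hvS : v ∈ S := (hSmem v).mpr ⟨by omega, hget1⟩
      have hv'S : v' ∈ S := (hSmem v').mpr ⟨by omega, hget2⟩
      have e1 : cnt w (Sum.inr m) v v' = 1 := by
        rw [keyA, List.count_cons_self, hcntj]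
        simp
      have e2 : cnt w (Sum.inl m) v v' = 0 := by
        rw [keyA, List.count_cons_of_ne (by simp), hcnti]
        simp
      have := hEq v hvS v' hv'S (by omega)
      omega

end Main
end Word

end CrownSplit

namespace CrownSplit

section Assemble

variable {n : ℕ}

lemma crown_adj_lr {i j : Fin n} : (Crown n).Adj (Sum.inl i) (Sum.inr j) ↔ i ≠ j := by
  rw [Crown, SimpleGraph.fromRel_adj]
  constructor
  · rintro ⟨-, h | h⟩
    · exact h
    · exact absurd h not_false
  · intro h
    exact ⟨by simp, Or.inl h⟩

lemma crown_nadj_ll {i j : Fin n} : ¬ (Crown n).Adj (Sum.inl i) (Sum.inl j) := by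
  rw [Crown, SimpleGraph.fromRel_adj]
  rintro ⟨-, h | h⟩ <;> exact h

end Assemble

end CrownSplit

attribute [local instance 2000] instBEqOfDecidableEq

/- Lemma 2 of the paper: for `n ≥ 5`, in any `k`-uniform word representing
`H_{n,n}`, the part `A = {1, …, n}` is splittable: some cyclic shift of `w` has
its subword induced by `A` equal to a concatenation of `k` permutations of `A`. -/
open CrownSplit in
/-- Lemma 2 of the paper: for `n ≥ 5`, in any `k`-uniform word representing
`H_{n,n}`, the part `A = {1, …, n}` is splittable: some cyclic shift of `w` has
its subword induced by `A` equal to a concatenation of `k` permutations of `A`. -/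
theorem crown_left_part_splittable (n k : ℕ) (hn : 5 ≤ n)
    (w : List (Fin n ⊕ Fin n)) (hk : IsUniform w k) (hrep : Represents w (Crown n)) :
    ∃ u u' : List (Fin n ⊕ Fin n), w = u ++ u' ∧
      ∃ P : Fin k → List (Fin n ⊕ Fin n),
        (∀ i, IsPermOf (P i) (leftSet n)) ∧
        ((u' ++ u).filter fun z => decide (z ∈ leftSet n)) = (List.ofFn P).flatten := by
  classical
  have hmem : ∀ v : Fin n ⊕ Fin n, v ∈ w := hrep.1
  have hAlt : ∀ i j : Fin n, i ≠ j → Alternate w (Sum.inl i) (Sum.inr j) := by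
    intro i j hij
    exact (hrep.2 _ _ (by simp)).mp (crown_adj_lr.mpr hij)
  have hNAll : ∀ i j : Fin n, i ≠ j → ¬ Alternate w (Sum.inl i) (Sum.inl j) := by
    intro i j hij halt
    exact crown_nadj_ll ((hrep.2 _ _ (by simp [hij])).mpr halt)
  have hNAy : ∀ i : Fin n, ¬ Alternate w (Sum.inl i) (Sum.inr i) := by
    intro i halt
    have := (hrep.2 _ _ (by simp)).mpr halt
    rw [crown_adj_lr] at this
    exact this rfl
  obtain ⟨q, hqN, hmid⟩ := exists_good_cut w (by omega) hk hmem hAlt hNAll hNAy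
  set N := w.length with hNdef
  set r : List (Fin n ⊕ Fin n) := w.drop q ++ w.take q with hrdef
  have hslice : ∀ t, t ≤ N → r.take t = slc w q (q + t) := by
    intro t ht
    have h1 : slc w q (q + t) = (w.drop q ++ w).take t := by
      rw [slc]
      have e1 : (W3 w).take (q + t) = (w ++ w).take (q + t) := by
        rw [W3_assoc]
        exact List.take_append_of_le_length (by simp; omega)
      rw [e1, List.drop_take]
      have e2 : q + t - q = t := by omega
      rw [e2, List.drop_append_of_le_length (by omega)]
    rw [h1, hrdef, List.take_append, List.take_append]
    congr 1
    rw [List.take_take]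
    have hle : t - (w.drop q).length ≤ q := by
      rw [List.length_drop]; omega
    rw [Nat.min_eq_left hle]
  have hprefZ : ∀ t, t ≤ N → ∀ x : Fin n ⊕ Fin n,
      ((r.take t).count x : ℤ) = cnt w x q (q + t) := by
    intro t ht x
    rw [hslice t ht]
    exact count_slice w (by omega) x
  have hpairN : ∀ t, t ≤ N → ∀ i j : Fin n,
      (r.take t).count (Sum.inl i) ≤ (r.take t).count (Sum.inl j) + 1 := by
    intro t ht i j
    rcases eq_or_ne i j with rfl | hij
    · omega
    have hb := hmid i j hij (q + t)
    rw [abs_le] at hb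
    have hs := gg_sub w i j q (q + t)
    have h1 := hprefZ t ht (Sum.inl i)
    have h2 := hprefZ t ht (Sum.inl j)
    omega
  have hcr : ∀ x : Fin n ⊕ Fin n, r.count x = w.count x := by
    intro x
    have h1 := congrArg (List.count x) (List.take_append_drop q w)
    rw [List.count_append] at h1
    rw [hrdef, List.count_append]
    omega
  have hrlen : r.length = N := by
    rw [hrdef]
    simp
    omega
  set pA : (Fin n ⊕ Fin n) → Bool := fun z => decide (z ∈ leftSet n) with hpAdef
  have hpAl : ∀ i : Fin n, pA (Sum.inl i) = true := by
    intro i; simp [hpAdef, leftSet]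
  have hpAr : ∀ j : Fin n, pA (Sum.inr j) = false := by
    intro j; simp [hpAdef, leftSet]
  set fa : List (Fin n ⊕ Fin n) := r.filter pA with hfadef
  have hcfal : ∀ i : Fin n, fa.count (Sum.inl i) = k := by
    intro i
    rw [hfadef, List.count_filter (hpAl i), hcr]
    exact hk _
  have hcfar : ∀ j : Fin n, fa.count (Sum.inr j) = 0 := by
    intro j
    rw [List.count_eq_zero]
    intro hmem'
    have := List.of_mem_filter hmem'
    rw [hpAr] at this
    exact Bool.noConfusion this
  have hlenfa : fa.length = n * k := by
    have hsum := sum_count_univ fa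
    rw [Fintype.sum_sum_type] at hsum
    have h1 : ∀ i : Fin n, fa.count (Sum.inl i) = k := hcfal
    have h2 : ∀ j : Fin n, fa.count (Sum.inr j) = 0 := hcfar
    simp only [h1, h2, Finset.sum_const, Finset.card_univ, Fintype.card_fin,
      smul_eq_mul, Nat.mul_zero, Nat.add_zero] at hsum
    omega
  set f : ℕ → ℕ := fun t => ((r.take t).filter pA).length with hfdef
  have hstep : ∀ t, f (t + 1) ≤ f t + 1 := by
    intro t
    simp only [hfdef, List.take_succ, List.filter_append, List.length_append]
    have : (r[t]?.toList.filter pA).length ≤ 1 := by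
      cases h : r[t]? with
      | none => simp
      | some a => cases hpa : pA a <;> simp [List.filter, hpa]
    omega
  have hf0 : f 0 = 0 := by simp [hfdef]
  have hfN : f N = n * k := by
    have : r.take N = r := List.take_of_length_le (by omega)
    rw [hfdef]
    simp only [this]
    rw [← hfadef, hlenfa]
  have hkeypref : ∀ T, T ≤ k → ∀ i : Fin n, (fa.take (T * n)).count (Sum.inl i) = T := by
    intro T hT i
    obtain ⟨t', ht'N, hft'⟩ := exists_prefix_len f hstep hf0 N (T * n)
      (by rw [hfN]; exact Nat.mul_le_mul_right n hT |>.trans (by rw [Nat.mul_comm]))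
    have hpre : (r.take t').filter pA <+: fa := List.IsPrefix.filter pA (List.take_prefix t' r)
    have hlen' : ((r.take t').filter pA).length = T * n := hft'
    have heq : (r.take t').filter pA = fa.take (T * n) := by
      have h' := List.prefix_iff_eq_take.mp hpre
      rw [hlen'] at h'
      exact h'
    set c : Fin n → ℕ := fun i => (r.take t').count (Sum.inl i) with hcdef
    have hcnt_take : ∀ i : Fin n, ((r.take t').filter pA).count (Sum.inl i) = c i := by
      intro i'
      rw [List.count_filter (hpAl i')]
    have hsumc : ∑ i, c i = T * n := by
      have hsum := sum_count_univ ((r.take t').filter pA)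
      rw [Fintype.sum_sum_type] at hsum
      have h2 : ∀ j : Fin n, ((r.take t').filter pA).count (Sum.inr j) = 0 := by
        intro j
        rw [List.count_eq_zero]
        intro hmem'
        have := List.of_mem_filter hmem'
        rw [hpAr] at this
        exact Bool.noConfusion this
      simp only [hcnt_take, h2, Finset.sum_const, Finset.card_univ, Fintype.card_fin,
        smul_eq_mul, Nat.mul_zero, Nat.add_zero] at hsum
      have hlen : ((r.take t').filter pA).length = T * n := hft'
      omega
    have hpairc : ∀ i j, c i ≤ c j + 1 := fun i j => hpairN t' ht'N i j
    have := counts_eq c hsumc hpairc i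
    rw [← heq, hcnt_take]
    exact this
  set P : Fin k → List (Fin n ⊕ Fin n) := fun i => (fa.drop (i * n)).take n with hPdef
  have hPcount : ∀ (i : Fin k) (a : Fin n), (P i).count (Sum.inl a) = 1 := by
    intro i a
    have hsplit : fa.take ((i + 1) * n) = fa.take (i * n) ++ P i := by
      have harith : ((i : ℕ) + 1) * n = i * n + n := by ring
      rw [harith, List.take_add, hPdef]
    have h1 := hkeypref ((i : ℕ) + 1) (by omega) a
    have h2 := hkeypref (i : ℕ) (by omega) a
    rw [hsplit, List.count_append] at h1
    omega
  have hPmem : ∀ (i : Fin k), ∀ x ∈ P i, x ∈ leftSet n := by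
    intro i x hx
    have hxfa : x ∈ fa := List.mem_of_mem_drop (List.mem_of_mem_take hx)
    have := List.of_mem_filter hxfa
    rw [hpAdef] at this
    exact of_decide_eq_true this
  refine ⟨w.take q, w.drop q, (List.take_append_drop q w).symm, P, ?_, ?_⟩
  · intro i
    constructor
    · intro a ha
      cases a with
      | inl a' => exact hPcount i a'
      | inr a' =>
        exfalso
        simp [leftSet] at ha
    · exact hPmem i
  · have : ((w.drop q ++ w.take q).filter fun z => decide (z ∈ leftSet n)) = fa := rfl
    rw [this]
    exact (flatten_chunks k n fa (by rw [hlenfa]; ring)).symm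
end

section
/- Let n ≥ 5, let w be a k-uniform word representing the crown graph H_{n,n} whose first letter belongs to B = {2, …, n}, and suppose the subword of w induced by B is a concatenation P′₁⋯P′_k in which each P′_i contains every element of B exactly once. Then for all t ≥ 1 and i ≥ 1 with i + t − 1 ≤ k, the factor of w that starts at the position of the first letter of P′_i and ends at the position of the last letter of P′_{i+t−1} contains at most t occurrences of the letter 1. -/
/-- The position (index in `w`) of the `(m+1)`-st letter of `w` (counting from
left to right) that satisfies the predicate `p`. -/
def nthPosWhere {V : Type*} (w : List V) (p : V → Bool) (m : ℕ) : ℕ :=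
  (((List.range w.length).filter fun q => w[q]?.any p).getD m 0)

section AuxCrown

variable {V : Type*}

lemma crown_pair_filter_comm [DecidableEq V] (w : List V) (a b : V) :
    (w.filter fun z => decide (z = a ∨ z = b)) = (w.filter fun z => decide (z = b ∨ z = a)) := by
  apply List.filter_congr
  intro x _
  simp [or_comm]

lemma crown_orient2 [DecidableEq V] [BEq V] [LawfulBEq V] (w : List V) : ∀ (a b : V), a ≠ b →
    ((w.filter fun z => decide (z = a ∨ z = b)).Chain' (· ≠ ·)) →
    (∀ y, (w.filter fun z => decide (z = a ∨ z = b)).head? = some y → y = a) →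
    ∀ p, (w.take p).count b ≤ (w.take p).count a ∧
      (w.take p).count a ≤ (w.take p).count b + 1 := by
  induction w with
  | nil => intro a b _ _ _ p; simp
  | cons d w' ih =>
    intro a b hab hch hhd p
    cases p with
    | zero => simp
    | succ p =>
      rw [List.take_succ_cons, List.count_cons, List.count_cons]
      by_cases hda : d = a
      · subst hda
        have hfil : ((d :: w').filter fun z => decide (z = d ∨ z = b))
            = d :: (w'.filter fun z => decide (z = d ∨ z = b)) := by
          rw [List.filter_cons]; simp
        rw [hfil] at hch
        have hch' := List.isChain_cons.mp hch
        have hhd' : ∀ y, (w'.filter fun z => decide (z = b ∨ z = d)).head? = some y → y = b := by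
          intro y hy
          rw [← crown_pair_filter_comm] at hy
          have hmem : y ∈ w'.filter fun z => decide (z = d ∨ z = b) :=
            List.mem_of_mem_head? (by rw [hy]; simp)
          have := List.of_mem_filter hmem
          have hne := hch'.1 y (by rw [hy]; simp)
          simp at this
          rcases this with h | h
          · exact absurd h.symm hne
          · exact h
        have hchsw : ((w'.filter fun z => decide (z = b ∨ z = d)).Chain' (· ≠ ·)) := by
          rw [← crown_pair_filter_comm]; exact hch'.2
        have := ih b d hab.symm hchsw hhd' p
        simp [hab, Ne.symm hab]
        omega
      · by_cases hdb : d = b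
        · subst hdb
          exfalso
          have hfil : ((d :: w').filter fun z => decide (z = a ∨ z = d))
              = d :: (w'.filter fun z => decide (z = a ∨ z = d)) := by
            rw [List.filter_cons]; simp
          have := hhd d (by rw [hfil]; rfl)
          exact hab this.symm
        · have hfil : ((d :: w').filter fun z => decide (z = a ∨ z = b))
              = (w'.filter fun z => decide (z = a ∨ z = b)) := by
            rw [List.filter_cons]; simp [hda, hdb]
          rw [hfil] at hch hhd
          have := ih a b hab hch hhd p
          simp [hda, hdb]
          omega

lemma crown_conv2 [DecidableEq V] [BEq V] [LawfulBEq V] (w : List V) : ∀ (a b : V), a ≠ b →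
    (∀ p, (w.take p).count b ≤ (w.take p).count a ∧
      (w.take p).count a ≤ (w.take p).count b + 1) →
    ((w.filter fun z => decide (z = a ∨ z = b)).Chain' (· ≠ ·)) ∧
      (∀ y, (w.filter fun z => decide (z = a ∨ z = b)).head? = some y → y = a) := by
  induction w with
  | nil => intro a b _ _; simp [List.Chain']
  | cons d w' ih =>
    intro a b hab hcnt
    by_cases hdb : d = b
    · exfalso
      subst hdb
      have := hcnt 1
      simp [List.count_cons, Ne.symm hab] at this
    · by_cases hda : d = a
      · subst hda
        have hcnt' : ∀ p, (w'.take p).count d ≤ (w'.take p).count b ∧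
            (w'.take p).count b ≤ (w'.take p).count d + 1 := by
          intro p
          have := hcnt (p + 1)
          rw [List.take_succ_cons, List.count_cons, List.count_cons] at this
          simp [hab, Ne.symm hab] at this
          omega
        have hsw := ih b d hab.symm hcnt'
        have hfil : ((d :: w').filter fun z => decide (z = d ∨ z = b))
            = d :: (w'.filter fun z => decide (z = d ∨ z = b)) := by
          rw [List.filter_cons]; simp
        rw [hfil]
        constructor
        · simp only [List.Chain', List.isChain_cons]
          constructor
          · intro y hy
            rw [crown_pair_filter_comm] at hy
            have := hsw.2 y hy
            subst this
            exact hab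
          · rw [crown_pair_filter_comm]; exact hsw.1
        · intro y hy
          rw [List.head?_cons] at hy
          exact (Option.some_inj.mp hy).symm
      · have hcnt' : ∀ p, (w'.take p).count b ≤ (w'.take p).count a ∧
            (w'.take p).count a ≤ (w'.take p).count b + 1 := by
          intro p
          have := hcnt (p + 1)
          rw [List.take_succ_cons, List.count_cons, List.count_cons] at this
          simp [hda, hdb] at this
          omega
        have hfil : ((d :: w').filter fun z => decide (z = a ∨ z = b))
            = (w'.filter fun z => decide (z = a ∨ z = b)) := by
          rw [List.filter_cons]; simp [hda, hdb]
        rw [hfil]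
        exact ih a b hab hcnt'

lemma crown_orient [DecidableEq V] [BEq V] [LawfulBEq V] (w : List V) (a b : V) (hab : a ≠ b)
    (halt : (w.filter fun z => decide (z = a ∨ z = b)).Chain' (· ≠ ·)) :
    (∀ p, (w.take p).count b ≤ (w.take p).count a ∧
      (w.take p).count a ≤ (w.take p).count b + 1) ∨
    (∀ p, (w.take p).count a ≤ (w.take p).count b ∧
      (w.take p).count b ≤ (w.take p).count a + 1) := by
  rcases h : (w.filter fun z => decide (z = a ∨ z = b)).head? with _ | y
  · left
    have hnil : (w.filter fun z => decide (z = a ∨ z = b)) = [] := List.head?_eq_none_iff.mp h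
    have hz : ∀ c, (c = a ∨ c = b) → ∀ p, (w.take p).count c = 0 := by
      intro c hc p
      rw [List.count_eq_zero]
      intro hmem
      have : c ∈ w.filter fun z => decide (z = a ∨ z = b) :=
        List.mem_filter.mpr ⟨(List.take_prefix p w).subset hmem, by simp [hc]⟩
      rw [hnil] at this
      simp at this
    intro p
    rw [hz a (Or.inl rfl) p, hz b (Or.inr rfl) p]
    omega
  · have hmem : y ∈ w.filter fun z => decide (z = a ∨ z = b) :=
      List.mem_of_mem_head? (by rw [h]; simp)
    have hy := List.of_mem_filter hmem
    simp at hy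
    rcases hy with rfl | rfl
    · left
      exact crown_orient2 w y b hab halt (fun y' hy' => by
        rw [h] at hy'; exact (Option.some_inj.mp hy').symm)
    · right
      exact crown_orient2 w y a hab.symm
        (by rw [← crown_pair_filter_comm]; exact halt)
        (fun y' hy' => by
          rw [← crown_pair_filter_comm, h] at hy'; exact (Option.some_inj.mp hy').symm)

lemma crown_countP_take_eq (w : List V) (g : V → Bool) :
    ∀ p, p ≤ w.length →
    ((List.range p).filter fun q => w[q]?.any g).length = (w.take p).countP g := by
  intro p
  induction p with
  | zero => simp
  | succ p ih =>
    intro hp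
    have hlt : p < w.length := hp
    rw [List.range_succ, List.filter_append, List.length_append, ih (le_of_lt hlt),
      List.take_succ, List.countP_append]
    congr 1
    simp only [List.filter_singleton, List.getElem?_eq_getElem hlt,
      Option.any_some, Option.toList_some]
    by_cases hg : g w[p] <;> simp [hg]

lemma crown_filter_take_eq (w : List V) (g : V → Bool) (p : ℕ) :
    (w.take p).filter g = (w.filter g).take ((w.take p).countP g) := by
  have h1 : (w.take p).filter g <+: w.filter g := (List.take_prefix p w).filter g
  rw [List.countP_eq_length_filter]
  exact List.prefix_iff_eq_take.mp h1

lemma crown_nthPosWhere_spec (w : List V) (g : V → Bool) (j : ℕ)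
    (hj : j < (w.filter g).length) :
    ∃ h : nthPosWhere w g j < w.length,
      (w.take (nthPosWhere w g j)).countP g = j ∧
      w[nthPosWhere w g j] = (w.filter g)[j] := by
  classical
  set L := (List.range w.length).filter fun q => w[q]?.any g with hL
  have hLlen : L.length = (w.filter g).length := by
    rw [hL, crown_countP_take_eq w g w.length le_rfl, List.take_length,
      List.countP_eq_length_filter]
  have hjL : j < L.length := by omega
  have hst : nthPosWhere w g j = L[j] := List.getD_eq_getElem L 0 hjL
  set st := nthPosWhere w g j with hstdef
  have hmem : st ∈ L := by rw [hst]; exact List.getElem_mem hjL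
  have hmem' := List.mem_filter.mp hmem
  have hstlt : st < w.length := List.mem_range.mp hmem'.1
  have hgst : g w[st] = true := by
    have := hmem'.2
    rw [List.getElem?_eq_getElem hstlt] at this
    simpa using this
  have hsplit : List.range w.length
      = List.range st ++ (List.range (w.length - st)).map (fun x => st + x) := by
    rw [← List.range_add]
    congr 1
    omega
  have hLsplit : L = ((List.range st).filter fun q => w[q]?.any g)
      ++ (((List.range (w.length - st)).map (fun x => st + x)).filter
          fun q => w[q]?.any g) := by
    rw [hL, hsplit, List.filter_append]
  set A := ((List.range st).filter fun q => w[q]?.any g) with hA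
  set R := (((List.range (w.length - st)).map (fun x => st + x)).filter
      fun q => w[q]?.any g) with hR
  have hAlt : ∀ q ∈ A, q < st := by
    intro q hq
    exact List.mem_range.mp (List.mem_filter.mp hq).1
  have hRge : ∀ q ∈ R, st ≤ q := by
    intro q hq
    obtain ⟨x, _, hx⟩ := List.mem_map.mp (List.mem_filter.mp hq).1
    omega
  have hpw : L.Pairwise (· < ·) := List.pairwise_lt_range.filter _
  have hALlen : A.length = j := by
    rcases lt_trichotomy A.length j with h | h | h
    · exfalso
      have hAL : A.length < L.length := by omega
      have hlt2 : L[A.length] < L[j] := by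
        have := List.pairwise_iff_get.mp hpw ⟨A.length, hAL⟩ ⟨j, hjL⟩ h
        simpa using this
      rw [← hst] at hlt2
      have hRL : L[A.length] ∈ R := by
        have e : L[A.length] = (A ++ R)[A.length]'(by rw [← hLsplit]; exact hAL) :=
          List.getElem_of_eq hLsplit hAL
        rw [e, List.getElem_append_right (le_refl A.length)]
        apply List.getElem_mem
      have := hRge _ hRL
      omega
    · exact h.symm ▸ rfl
    · exfalso
      have hjA : L[j] ∈ A := by
        have e : L[j] = (A ++ R)[j]'(by rw [← hLsplit]; exact hjL) :=
          List.getElem_of_eq hLsplit hjL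
        rw [e, List.getElem_append_left (by omega)]
        apply List.getElem_mem
      have := hAlt _ hjA
      omega
  have hcount : (w.take st).countP g = j := by
    rw [← crown_countP_take_eq w g st (le_of_lt hstlt), ← hA, hALlen]
  refine ⟨hstlt, hcount, ?_⟩
  have h1 : (w.take st).filter g = (w.filter g).take j := by
    rw [crown_filter_take_eq, hcount]
  have h2 : (w.take (st+1)).filter g = (w.filter g).take j ++ [w[st]] := by
    rw [List.take_succ, List.getElem?_eq_getElem hstlt]
    simp only [Option.toList_some, List.filter_append]
    rw [h1, List.filter_cons]
    simp [hgst]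
  have h3 : (w.take (st+1)).countP g = j + 1 := by
    have := congrArg List.length h2
    rw [← List.countP_eq_length_filter] at this
    simp at this
    omega
  have h4 : (w.filter g).take (j+1) = (w.filter g).take j ++ [(w.filter g)[j]] := by
    rw [List.take_succ, List.getElem?_eq_getElem hj]
    simp
  have h5 : (w.filter g).take j ++ [w[st]] = (w.filter g).take j ++ [(w.filter g)[j]] := by
    rw [← h2, ← h4, crown_filter_take_eq, h3]
  have := List.append_inj_right h5 rfl
  simpa using this

lemma crown_nthPosWhere_mono (w : List V) (g : V → Bool) {j j' : ℕ} (h : j < j')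
    (hj' : j' < (w.filter g).length) :
    nthPosWhere w g j < nthPosWhere w g j' := by
  classical
  set L := (List.range w.length).filter fun q => w[q]?.any g with hL
  have hLlen : L.length = (w.filter g).length := by
    rw [hL, crown_countP_take_eq w g w.length le_rfl, List.take_length,
      List.countP_eq_length_filter]
  have hj2 : j' < L.length := by omega
  have hj1 : j < L.length := by omega
  have e1 : nthPosWhere w g j = L[j] := List.getD_eq_getElem L 0 hj1
  have e2 : nthPosWhere w g j' = L[j'] := List.getD_eq_getElem L 0 hj2
  rw [e1, e2]
  have hpw : L.Pairwise (· < ·) := List.pairwise_lt_range.filter _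
  have := List.pairwise_iff_get.mp hpw ⟨j, hj1⟩ ⟨j', hj2⟩ h
  simpa using this

lemma crown_flatten_take_blocks (N : ℕ) :
    ∀ (bs : List (List V)) (q : ℕ), (∀ l ∈ bs, l.length = N) → q ≤ bs.length →
    bs.flatten.take (q * N) = (bs.take q).flatten := by
  intro bs
  induction bs with
  | nil =>
    intro q _ hq
    have : q = 0 := Nat.le_zero.mp hq
    subst this; simp
  | cons l bs' ih =>
    intro q hlen hq
    cases q with
    | zero => simp
    | succ q' =>
      have hl : l.length = N := hlen l (by simp)
      have he : (q' + 1) * N = l.length + q' * N := by rw [hl]; ring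
      rw [List.flatten_cons, he, List.take_append,
        List.take_of_length_le (by omega), Nat.add_sub_cancel_left]
      rw [List.take_succ_cons, List.flatten_cons]
      congr 1
      exact ih q' (fun x hx => hlen x (by simp [hx])) (by simpa using hq)

lemma crown_count_flatten_ones [BEq V] [LawfulBEq V] (c : V) :
    ∀ (bs : List (List V)), (∀ l ∈ bs, l.count c = 1) → bs.flatten.count c = bs.length := by
  intro bs
  induction bs with
  | nil => simp
  | cons l bs' ih =>
    intro h
    rw [List.flatten_cons, List.count_append, ih (fun x hx => h x (by simp [hx])),
      h l (by simp)]
    simp [Nat.add_comm]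


lemma sum_beq_eq_decide (n : ℕ) (x y : Fin n ⊕ Fin n) : (x == y) = decide (x = y) := by
  cases x with
  | inl a =>
    cases y with
    | inl b =>
      have h1 : ((Sum.inl a : Fin n ⊕ Fin n) == Sum.inl b) = (a == b) := rfl
      rw [h1]
      by_cases h : a = b <;> simp [h]
    | inr b =>
      have h1 : ((Sum.inl a : Fin n ⊕ Fin n) == Sum.inr b) = false := rfl
      rw [h1]
      simp
  | inr a =>
    cases y with
    | inl b =>
      have h1 : ((Sum.inr a : Fin n ⊕ Fin n) == Sum.inl b) = false := rfl
      rw [h1]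
      simp
    | inr b =>
      have h1 : ((Sum.inr a : Fin n ⊕ Fin n) == Sum.inr b) = (a == b) := rfl
      rw [h1]
      by_cases h : a = b <;> simp [h]

instance sumLawfulBEq (n : ℕ) : LawfulBEq (Fin n ⊕ Fin n) where
  eq_of_beq := by
    intro a b h
    rw [sum_beq_eq_decide] at h
    exact of_decide_eq_true h
  rfl := by
    intro a
    rw [sum_beq_eq_decide]
    simp

lemma crown_count_deq {V : Type*} [DecidableEq V] [inst : BEq V] [linst : @LawfulBEq V inst]
    (a : V) (l : List V) :
    @List.count V inst a l = @List.count V instBEqOfDecidableEq a l := by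
  induction l with
  | nil => rfl
  | cons d l ih =>
    rw [@List.count_cons V inst, @List.count_cons V instBEqOfDecidableEq, ih]
    congr 1
    by_cases h : d = a <;> simp [h]

end AuxCrown

set_option maxHeartbeats 2000000 in
/-- Claim 1 in the proof of Lemma 2: let `n ≥ 5`, let `w` be a `k`-uniform word
representing `H_{n,n}` whose first letter belongs to `B = {2, …, n}`, and suppose
the subword of `w` induced by `B` is a concatenation `P′₁ ⋯ P′_k` of permutations
of `B`.  Then for all `t ≥ 1`, `i ≥ 1` with `i + t - 1 ≤ k`, the factor of `w`
starting at the first letter of `P′_i` and ending at the last letter of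
`P′_{i+t-1}` contains at most `t` occurrences of the letter `1`.  (The first
letter of `P′_i` is the `((i-1)(n-1)+1)`-st letter of `w` lying in `B`, and the
last letter of `P′_{i+t-1}` is the `((i+t-1)(n-1))`-th such letter.) -/
theorem crown_claim_one (n k : ℕ) (hn : 5 ≤ n)
    (w : List (Fin n ⊕ Fin n)) (hk : IsUniform w k) (hrep : Represents w (Crown n))
    (one : Fin n ⊕ Fin n) (hone : one = Sum.inl ⟨0, by omega⟩)
    (B : Finset (Fin n ⊕ Fin n))
    (hB : B = (Finset.univ.filter fun z => z.isLeft) \ {one})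
    (hfirst : ∃ z ∈ B, w.head? = some z)
    (P : Fin k → List (Fin n ⊕ Fin n)) (hP : ∀ i, IsPermOf (P i) B)
    (hind : (w.filter fun z => decide (z ∈ B)) = (List.ofFn P).flatten)
    (t i : ℕ) (ht : 1 ≤ t) (hi : 1 ≤ i) (hit : i + t - 1 ≤ k) :
    ((w.take (nthPosWhere w (fun z => decide (z ∈ B)) ((i + t - 1) * (n - 1) - 1) + 1)).drop
        (nthPosWhere w (fun z => decide (z ∈ B)) ((i - 1) * (n - 1)))).count one ≤ t := by
  classical
  set g : (Fin n ⊕ Fin n) → Bool := (fun z => decide (z ∈ B)) with hg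
  -- basic facts about B
  have honeB : one ∉ B := by rw [hB]; simp
  have hBleft : ∀ z ∈ B, ∃ a : Fin n, z = Sum.inl a ∧ (a : ℕ) ≠ 0 := by
    intro z hz
    rw [hB, Finset.mem_sdiff, Finset.mem_filter] at hz
    obtain ⟨⟨-, hzl⟩, hzo⟩ := hz
    rcases z with a | a
    · refine ⟨a, rfl, ?_⟩
      intro ha0
      apply hzo
      rw [Finset.mem_singleton, hone]
      congr 1
      exact Fin.ext ha0
    · simp at hzl
  have hfl : (Finset.univ.filter fun z : Fin n ⊕ Fin n => z.isLeft)
      = Finset.univ.image Sum.inl := by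
    ext z
    rcases z with a | a <;> simp
  have hBcard : B.card = n - 1 := by
    rw [hB, Finset.card_sdiff_of_subset]
    · rw [hfl, Finset.card_image_of_injective _ Sum.inl_injective, Finset.card_univ,
        Fintype.card_fin, Finset.card_singleton]
    · rw [Finset.singleton_subset_iff, Finset.mem_filter, hone]
      exact ⟨Finset.mem_univ _, rfl⟩
  -- block facts
  have hPlen : ∀ idx : Fin k, (P idx).length = n - 1 := by
    intro idx
    obtain ⟨h1, h2⟩ := hP idx
    have htf : (P idx).toFinset = B := by
      ext a
      simp only [List.mem_toFinset]
      constructor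
      · exact h2 a
      · intro ha
        have hcnt := h1 a ha
        exact (@List.count_pos_iff _ instBEqOfDecidableEq _ _ _).mp
          (lt_of_lt_of_eq Nat.zero_lt_one hcnt.symm)
    have h3 := List.sum_toFinset_count_eq_length (P idx)
    rw [htf] at h3
    rw [← h3, Finset.sum_congr rfl (fun a ha => h1 a ha), Finset.sum_const, smul_eq_mul,
      mul_one, hBcard]
  have hofLen : ∀ l ∈ List.ofFn P, l.length = n - 1 := by
    intro l hl
    obtain ⟨idx, rfl⟩ := List.mem_ofFn.mp hl
    exact hPlen idx
  have hulen : (w.filter g).length = k * (n - 1) := by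
    rw [hind, List.length_flatten]
    have hmap : (List.ofFn P).map List.length = List.replicate k (n - 1) := by
      apply List.eq_replicate_iff.mpr
      constructor
      · simp
      · intro b hb
        obtain ⟨l, hl, rfl⟩ := List.mem_map.mp hb
        exact hofLen l hl
    rw [hmap, List.sum_replicate, smul_eq_mul]
  -- counts transfer
  have hctake : ∀ c ∈ B, ∀ p : ℕ,
      (w.take p).count c = ((w.filter g).take ((w.take p).countP g)).count c := by
    intro c hc p
    rw [← crown_filter_take_eq w g p, List.count_filter (by simp [hg, hc])]
  have hcntPle : ∀ p, (w.take p).countP g ≤ k * (n - 1) := by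
    intro p
    have h1 : (w.take p).countP g ≤ w.countP g :=
      (List.take_sublist p w).countP_le
    have h2 : w.countP g = (w.filter g).length := List.countP_eq_length_filter
    rw [h2, hulen] at h1
    exact h1
  have hblockcnt : ∀ c ∈ B, ∀ q : ℕ, q ≤ k →
      ((w.filter g).take (q * (n - 1))).count c = q := by
    intro c hc q hq
    rw [hind, crown_flatten_take_blocks (n - 1) (List.ofFn P) q hofLen (by simpa using hq)]
    rw [crown_count_flatten_ones c _ ?_]
    · rw [List.length_take, List.length_ofFn]
      omega
    · intro l hl
      obtain ⟨idx, rfl⟩ := List.mem_ofFn.mp (List.mem_of_mem_take hl)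
      rw [crown_count_deq]
      exact (hP idx).1 c hc
  have hcu : ∀ c ∈ B, (w.filter g).count c = k := by
    intro c hc
    rw [List.count_filter (by simp [hg, hc]), crown_count_deq]
    exact hk c
  -- the sandwich from the block structure
  have hblocks : ∀ c ∈ B, ∀ d ∈ B, ∀ p,
      (w.take p).count c ≤ (w.take p).count d + 1 := by
    intro c hc d hd p
    rw [hctake c hc p, hctake d hd p]
    set m := (w.take p).countP g with hm
    have hmle : m ≤ k * (n - 1) := hcntPle p
    rcases eq_or_lt_of_le hmle with he | hlt2
    · rw [he, ← hulen, List.take_length, hcu c hc, hcu d hd]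
      omega
    · have hn1 : 0 < n - 1 := by omega
      obtain ⟨q, r, hr, hmeq⟩ : ∃ q r, r < n - 1 ∧ m = q * (n - 1) + r :=
        ⟨m / (n - 1), m % (n - 1), Nat.mod_lt m hn1, by
          rw [Nat.mul_comm]
          exact (Nat.div_add_mod m (n - 1)).symm⟩
      have h1 : q * (n - 1) ≤ m := by omega
      have h2 : m < (q + 1) * (n - 1) := by
        have hx : (q + 1) * (n - 1) = q * (n - 1) + (n - 1) := by ring
        omega
      have hqk : q + 1 ≤ k := by
        by_contra hh
        have hkq : k ≤ q := by omega
        have hx := Nat.mul_le_mul_right (n - 1) hkq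
        omega
      have hup : ((w.filter g).take m).count c ≤ q + 1 := by
        have hsub : ((w.filter g).take m).count c ≤ ((w.filter g).take ((q + 1) * (n - 1))).count c := by
          apply List.Sublist.count_le
          rw [show (w.filter g).take m = ((w.filter g).take ((q + 1) * (n - 1))).take m by
            rw [List.take_take, min_eq_left (le_of_lt h2)]]
          exact List.take_sublist _ _
        rw [hblockcnt c hc (q + 1) hqk] at hsub
        exact hsub
      have hlo : q ≤ ((w.filter g).take m).count d := by
        have hsub : ((w.filter g).take (q * (n - 1))).count d ≤ ((w.filter g).take m).count d := by
          apply List.Sublist.count_le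
          rw [show (w.filter g).take (q * (n - 1)) = ((w.filter g).take m).take (q * (n - 1)) by
            rw [List.take_take, min_eq_left h1]]
          exact List.take_sublist _ _
        rw [hblockcnt d hd q (by omega)] at hsub
        exact hsub
      omega
  -- positions
  have hflen : (w.filter g).length = k * (n - 1) := hulen
  have hmul1 : (i - 1) * (n - 1) + (n - 1) = i * (n - 1) := by
    have : i - 1 + 1 = i := by omega
    calc (i - 1) * (n - 1) + (n - 1) = (i - 1 + 1) * (n - 1) := by ring
    _ = i * (n - 1) := by rw [this]
  have hmul2 : i * (n - 1) ≤ (i + t - 1) * (n - 1) :=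
    Nat.mul_le_mul_right (n - 1) (by omega)
  have hmul3 : (i + t - 1) * (n - 1) ≤ k * (n - 1) :=
    Nat.mul_le_mul_right (n - 1) hit
  have hmul4 : 1 * (n - 1) ≤ (i + t - 1) * (n - 1) :=
    Nat.mul_le_mul_right (n - 1) (by omega)
  have hj1lt : (i - 1) * (n - 1) < (w.filter g).length := by
    rw [hflen]; omega
  have hj2lt : (i + t - 1) * (n - 1) - 1 < (w.filter g).length := by
    rw [hflen]; omega
  obtain ⟨hst_lt, hst_cnt, hst_eq⟩ := crown_nthPosWhere_spec w g ((i - 1) * (n - 1)) hj1lt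
  obtain ⟨hen_lt, hen_cnt, hen_eq⟩ :=
    crown_nthPosWhere_spec w g ((i + t - 1) * (n - 1) - 1) hj2lt
  set st := nthPosWhere w g ((i - 1) * (n - 1)) with hstd
  set en := nthPosWhere w g ((i + t - 1) * (n - 1) - 1) with hend
  have hsten : st < en := by
    apply crown_nthPosWhere_mono w g _ hj2lt
    omega
  set b1 := (w.filter g)[(i - 1) * (n - 1)]'hj1lt with hb1d
  set b2 := (w.filter g)[(i + t - 1) * (n - 1) - 1]'hj2lt with hb2d
  have hb1B : b1 ∈ B := by
    have hm : b1 ∈ w.filter g := by rw [hb1d]; exact List.getElem_mem _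
    have := List.of_mem_filter hm
    simpa [hg] using this
  have hb2B : b2 ∈ B := by
    have hm : b2 ∈ w.filter g := by rw [hb2d]; exact List.getElem_mem _
    have := List.of_mem_filter hm
    simpa [hg] using this
  obtain ⟨a1, hb1a, ha1ne⟩ := hBleft b1 hb1B
  obtain ⟨a2, hb2a, ha2ne⟩ := hBleft b2 hb2B
  -- successor count helper
  have hsucc : ∀ (p : ℕ) (hp : p < w.length) (c : Fin n ⊕ Fin n),
      (w.take (p + 1)).count c = (w.take p).count c + (if w[p]'hp = c then 1 else 0) := by
    intro p hp c
    rw [List.take_succ, List.getElem?_eq_getElem hp]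
    simp only [Option.toList_some, List.count_append]
    congr 1
    by_cases hcc : w[p]'hp = c <;> simp [List.count_cons, hcc]
  -- exact counts at the endpoints
  have hp1st : (w.take st).count b1 = i - 1 := by
    rw [hctake b1 hb1B st, hst_cnt, hblockcnt b1 hb1B (i - 1) (by omega)]
  have hp1st1 : (w.take (st + 1)).count b1 = i := by
    rw [hsucc st hst_lt b1, hp1st, hst_eq, if_pos rfl]
    omega
  have hcnten1 : (w.take (en + 1)).countP g = (i + t - 1) * (n - 1) := by
    have hgen : g w[en] = true := by
      rw [hen_eq]
      simp [hg, hb2B]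
    have : (w.take (en + 1)).countP g = (w.take en).countP g + 1 := by
      rw [List.take_succ, List.getElem?_eq_getElem hen_lt, List.countP_append]
      simp [hgen]
    omega
  have hp2en1 : (w.take (en + 1)).count b2 = i + t - 1 := by
    rw [hctake b2 hb2B (en + 1), hcnten1, hblockcnt b2 hb2B (i + t - 1) hit]
  have hp2en : (w.take en).count b2 = i + t - 1 - 1 := by
    have h := hsucc en hen_lt b2
    rw [hen_eq, if_pos rfl] at h
    omega
  -- choose the right-side letter x'
  have hz0 : 0 < n := by omega
  have hcard3 : ({⟨0, hz0⟩, a1, a2} : Finset (Fin n)).card < Fintype.card (Fin n) := by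
    have h3 : ({⟨0, hz0⟩, a1, a2} : Finset (Fin n)).card ≤ 3 := by
      apply le_trans (Finset.card_insert_le _ _)
      have h4 := Finset.card_insert_le a1 ({a2} : Finset (Fin n))
      simp only [Finset.card_singleton] at h4
      omega
    rw [Fintype.card_fin]
    omega
  obtain ⟨jx, hjxmem⟩ : ∃ jx : Fin n, jx ∉ ({⟨0, hz0⟩, a1, a2} : Finset (Fin n)) := by
    have hpos : 0 < (({⟨0, hz0⟩, a1, a2} : Finset (Fin n))ᶜ).card := by
      rw [Finset.card_compl]
      omega
    obtain ⟨jx, hjx⟩ := Finset.card_pos.mp hpos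
    exact ⟨jx, Finset.mem_compl.mp hjx⟩
  simp only [Finset.mem_insert, Finset.mem_singleton, not_or] at hjxmem
  obtain ⟨hjx0, hjx1, hjx2⟩ := hjxmem
  set x' : Fin n ⊕ Fin n := Sum.inr jx with hx'd
  -- alternations
  have hadj1 : (Crown n).Adj one x' := by
    rw [hone, Crown, SimpleGraph.fromRel_adj]
    refine ⟨by simp, Or.inl ?_⟩
    intro hc
    exact hjx0 hc.symm
  have hadjb1 : (Crown n).Adj b1 x' := by
    rw [hb1a, Crown, SimpleGraph.fromRel_adj]
    refine ⟨by simp, Or.inl ?_⟩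
    intro hc
    exact hjx1 hc.symm
  have hadjb2 : (Crown n).Adj b2 x' := by
    rw [hb2a, Crown, SimpleGraph.fromRel_adj]
    refine ⟨by simp, Or.inl ?_⟩
    intro hc
    exact hjx2 hc.symm
  have hone_ne : one ≠ x' := by rw [hone, hx'd]; simp
  have hb1_ne : b1 ≠ x' := by rw [hb1a, hx'd]; simp
  have hb2_ne : b2 ≠ x' := by rw [hb2a, hx'd]; simp
  have halt1 : (w.filter fun z => decide (z = one ∨ z = x')).Chain' (· ≠ ·) :=
    (hrep.2 one x' hone_ne).mp hadj1
  have haltb1 : (w.filter fun z => decide (z = b1 ∨ z = x')).Chain' (· ≠ ·) :=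
    (hrep.2 b1 x' hb1_ne).mp hadjb1
  have haltb2 : (w.filter fun z => decide (z = b2 ∨ z = x')).Chain' (· ≠ ·) :=
    (hrep.2 b2 x' hb2_ne).mp hadjb2
  have O1 := crown_orient w one x' hone_ne halt1
  have O2 := crown_orient w b1 x' hb1_ne haltb1
  have O3 := crown_orient w b2 x' hb2_ne haltb2
  -- x' counts do not change across the endpoint letters
  have hxst : (w.take (st + 1)).count x' = (w.take st).count x' := by
    rw [hsucc st hst_lt x', hst_eq, if_neg hb1_ne, Nat.add_zero]
  have hxen : (w.take (en + 1)).count x' = (w.take en).count x' := by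
    rw [hsucc en hen_lt x', hen_eq, if_neg hb2_ne, Nat.add_zero]
  -- reduce the goal to prefix counts
  have hsplitc : (w.take (en + 1)).count one
      = (w.take st).count one + ((w.take (en + 1)).drop st).count one := by
    conv_lhs => rw [← List.take_append_drop st (w.take (en + 1))]
    rw [List.count_append, List.take_take, min_eq_left (by omega)]
  suffices hfin : (w.take (en + 1)).count one ≤ (w.take st).count one + t by omega
  rcases O2 with h2 | h2
  · rcases O3 with h3 | h3
    · -- b1 leads x', b2 leads x'
      have e1 : (w.take st).count x' = i - 1 := by
        have a1' := (h2 st).1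
        have a2' := (h2 (st + 1)).2
        omega
      have e2 : (w.take (en + 1)).count x' = i + t - 1 - 1 := by
        have a1' := (h3 en).1
        have a2' := (h3 (en + 1)).2
        omega
      rcases O1 with h1 | h1
      · have c1 := (h1 st).1
        have c2 := (h1 (en + 1)).2
        omega
      · have c1 := (h1 st).2
        have c2 := (h1 (en + 1)).1
        omega
    · -- b1 leads x', x' leads b2 : impossible
      exfalso
      by_cases hbb : b1 = b2
      · have c1 := (h2 st).1
        have c2 := (h3 (st + 1)).1
        rw [← hbb] at c2
        omega
      · have hs : ∀ p, (w.take p).count b2 ≤ (w.take p).count b1 ∧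
            (w.take p).count b1 ≤ (w.take p).count b2 + 1 := by
          intro p
          exact ⟨le_trans (h3 p).1 (h2 p).1, hblocks b1 hb1B b2 hb2B p⟩
        have halt12 := (crown_conv2 w b1 b2 hbb hs).1
        have hadj12 : (Crown n).Adj b1 b2 := (hrep.2 b1 b2 hbb).mpr halt12
        rw [hb1a, hb2a, Crown, SimpleGraph.fromRel_adj] at hadj12
        rcases hadj12.2 with hf | hf <;> exact hf
  · rcases O3 with h3 | h3
    · -- x' leads b1, b2 leads x'
      have e1 : (w.take st).count x' = i := by
        have a1' := (h2 (st + 1)).1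
        have a2' := (h2 st).2
        omega
      have e2 : (w.take (en + 1)).count x' = i + t - 1 - 1 := by
        have a1' := (h3 en).1
        have a2' := (h3 (en + 1)).2
        omega
      rcases O1 with h1 | h1
      · have c1 := (h1 st).1
        have c2 := (h1 (en + 1)).2
        omega
      · have c1 := (h1 st).2
        have c2 := (h1 (en + 1)).1
        omega
    · -- x' leads b1, x' leads b2
      have e1 : (w.take st).count x' = i := by
        have a1' := (h2 (st + 1)).1
        have a2' := (h2 st).2
        omega
      have e2 : (w.take (en + 1)).count x' = i + t - 1 := by
        have a1' := (h3 (en + 1)).1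
        have a2' := (h3 en).2
        omega
      rcases O1 with h1 | h1
      · have c1 := (h1 st).1
        have c2 := (h1 (en + 1)).2
        omega
      · have c1 := (h1 st).2
        have c2 := (h1 (en + 1)).1
        omega
end

section
/- Let n ≥ 5, let w be a k-uniform word representing the crown graph H_{n,n}, and suppose some cyclic shift of w has its subword induced by A = {1, …, n} equal to a concatenation P′₁⋯P′_k, where each P′_j contains every element of A exactly once. Then for every a ∈ A there exists j ∈ {1, …, k} such that a is the first letter of P′_j or a is the last letter of P′_j. -/
set_option linter.unusedSectionVars false

namespace CrownAux

variable {V : Type*} [DecidableEq V]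

/-- The perfectly alternating word `x y x y … x y` with `k` copies of `x y`. -/
def altRep (x y : V) : ℕ → List V
  | 0 => []
  | k + 1 => x :: y :: altRep x y k

lemma chain'_cons_altRep {x y : V} (hxy : x ≠ y) :
    ∀ k, List.Chain' (· ≠ ·) (y :: altRep x y k) := by
  intro k
  induction k with
  | zero => simp [altRep, List.Chain']
  | succ k ih =>
    rw [altRep, List.Chain', List.isChain_cons, List.isChain_cons]
    refine ⟨by simp [hxy.symm], by simp [hxy], ih⟩

lemma altRep_chain' {x y : V} (hxy : x ≠ y) (k : ℕ) :
    List.Chain' (· ≠ ·) (altRep x y k) := by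
  cases k with
  | zero => simp [altRep, List.Chain']
  | succ k =>
    rw [altRep, List.Chain', List.isChain_cons]
    exact ⟨by simp [hxy], chain'_cons_altRep hxy k⟩

lemma altRep_head? (x y : V) (k : ℕ) : (altRep x y (k + 1)).head? = some x := rfl

lemma altRep_getLast? (x y : V) : ∀ k, (altRep x y (k + 1)).getLast? = some y := by
  intro k
  induction k with
  | zero => simp [altRep]
  | succ k ih =>
    show (x :: y :: altRep x y (k + 1)).getLast? = some y
    rw [List.getLast?_cons_cons]
    exact ih


lemma count_append' (a : V) (l₁ l₂ : List V) :
    (l₁ ++ l₂).count a = l₁.count a + l₂.count a := List.count_append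

lemma count_pos' {a : V} {l : List V} : 0 < l.count a ↔ a ∈ l := List.count_pos_iff

lemma count_filter'' (f : V → Bool) {a : V} (h : f a = true) (l : List V) :
    (l.filter f).count a = l.count a := List.count_filter h

lemma count_filter_or_left (x y : V) (l : List V) :
    (l.filter fun z => decide (z = x ∨ z = y)).count x = l.count x :=
  List.count_filter (by simp)

lemma count_filter_or_right (x y : V) (l : List V) :
    (l.filter fun z => decide (z = x ∨ z = y)).count y = l.count y :=
  List.count_filter (by simp)

/-- Prefixes of the alternating word satisfy the balance inequalities. -/
lemma altRep_prefix_count {x y : V} (hxy : x ≠ y) :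
    ∀ (k : ℕ) (p : List V), p <+: altRep x y k →
      p.count y ≤ p.count x ∧ p.count x ≤ p.count y + 1 := by
  intro k
  induction k with
  | zero => intro p hp; rw [altRep, List.prefix_nil] at hp; simp [hp]
  | succ k ih =>
    intro p hp
    rw [altRep] at hp
    rcases p with _ | ⟨c, p⟩
    · simp
    rw [List.cons_prefix_cons] at hp
    obtain ⟨rfl, hp⟩ := hp
    rcases p with _ | ⟨d, p⟩
    · simp [List.count_cons, hxy, hxy.symm]
    rw [List.cons_prefix_cons] at hp
    obtain ⟨rfl, hp⟩ := hp
    have := ih p hp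
    simp only [List.count_cons, beq_iff_eq, hxy, hxy.symm, if_true, if_false, beq_self_eq_true]
    omega

lemma alt_struct_core {x y : V} (hxy : x ≠ y) :
    ∀ (k : ℕ) (l : List V), (∀ z ∈ l, z = x ∨ z = y) → l.count x = k → l.count y = k →
      List.Chain' (· ≠ ·) l → l.head? = some x → l = altRep x y k := by
  intro k
  induction k with
  | zero =>
    intro l h2 hcx _ _ hh
    rcases l with _ | ⟨c, l⟩
    · simp at hh
    · simp only [List.head?_cons, Option.some.injEq] at hh
      obtain rfl := hh.symm
      simp [List.count_cons] at hcx
  | succ k ih =>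
    intro l h2 hcx hcy hch hh
    rcases l with _ | ⟨c, l⟩
    · simp at hh
    simp only [List.head?_cons, Option.some.injEq] at hh
    obtain rfl := hh.symm
    have hcy' : l.count y = k + 1 := by
      simpa [List.count_cons, hxy, hxy.symm] using hcy
    have hl : l ≠ [] := by
      intro h; rw [h] at hcy'; simp at hcy'
    rcases l with _ | ⟨d, l⟩
    · exact absurd rfl hl
    have hd : d = y := by
      rcases h2 d (by simp) with h | h
      · exact absurd h.symm (List.isChain_cons_cons.mp hch).1
      · exact h
    obtain rfl := hd.symm
    have hcx' : l.count x = k := by simpa [List.count_cons, hxy, hxy.symm] using hcx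
    have hcy'' : l.count y = k := by simpa [List.count_cons] using hcy'
    have h2' : ∀ z ∈ l, z = x ∨ z = y := fun z hz => h2 z (by simp [hz])
    have hch' : List.Chain' (· ≠ ·) l := hch.tail.tail
    rcases Nat.eq_zero_or_pos k with hk | hk
    · subst hk
      have : l = [] := by
        rcases l with _ | ⟨e, l⟩
        · rfl
        · rcases h2' e (by simp) with h | h <;> obtain rfl := h.symm <;>
            simp [List.count_cons] at hcx' hcy''
      rw [this]; rfl
    · have hlne : l ≠ [] := by
        intro h; rw [h] at hcx'; simp at hcx'; omega
      rcases l with _ | ⟨e, l⟩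
      · exact absurd rfl hlne
      have he : e = x := by
        rcases h2' e (by simp) with h | h
        · exact h
        · obtain rfl := h.symm
          exact absurd rfl (List.isChain_cons_cons.mp (List.isChain_cons_cons.mp hch).2).1
      obtain rfl := he.symm
      have := ih (x :: l) h2' hcx' hcy'' hch' (by simp)
      rw [this]; rfl

lemma alt_struct {x y : V} (hxy : x ≠ y) (k : ℕ) (l : List V)
    (h2 : ∀ z ∈ l, z = x ∨ z = y) (hcx : l.count x = k) (hcy : l.count y = k)
    (hch : List.Chain' (· ≠ ·) l) : l = altRep x y k ∨ l = altRep y x k := by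
  rcases l with _ | ⟨c, l⟩
  · left
    have : k = 0 := by simpa using hcx.symm
    rw [this]; rfl
  · rcases h2 c (by simp) with h | h
    · obtain rfl := h.symm
      exact Or.inl (alt_struct_core hxy k _ h2 hcx hcy hch (by simp))
    · obtain rfl := h.symm
      exact Or.inr (alt_struct_core hxy.symm k _ (fun z hz => (h2 z hz).symm) hcy hcx hch (by simp))

lemma alt_criterion {x y : V} (hxy : x ≠ y) :
    ∀ (k : ℕ) (l : List V), (∀ z ∈ l, z = x ∨ z = y) → l.count x = k → l.count y = k →
      (∀ p, p <+: l → p.count y ≤ p.count x ∧ p.count x ≤ p.count y + 1) →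
      l = altRep x y k := by
  intro k
  induction k with
  | zero =>
    intro l h2 hcx hcy _
    rcases l with _ | ⟨c, l⟩
    · rfl
    · rcases h2 c (by simp) with h | h <;> obtain rfl := h.symm <;>
        simp [List.count_cons] at hcx hcy
  | succ k ih =>
    intro l h2 hcx hcy hpre
    rcases l with _ | ⟨c, l⟩
    · simp at hcx
    have hc : c = x := by
      rcases h2 c (by simp) with h | h
      · exact h
      · obtain rfl := h.symm
        have := hpre [y] ⟨l, rfl⟩
        simp [List.count_cons, hxy, hxy.symm] at this
    obtain rfl := hc.symm
    have hlne : l ≠ [] := by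
      intro h
      subst h
      simp [List.count_cons, hxy, hxy.symm] at hcy
    rcases l with _ | ⟨d, l⟩
    · exact absurd rfl hlne
    have hd : d = y := by
      rcases h2 d (by simp) with h | h
      · obtain rfl := h.symm
        have := hpre [x, x] ⟨l, rfl⟩
        simp [List.count_cons, hxy, hxy.symm] at this
      · exact h
    obtain rfl := hd.symm
    have hcx' : l.count x = k := by simpa [List.count_cons, hxy, hxy.symm] using hcx
    have hcy' : l.count y = k := by simpa [List.count_cons, hxy, hxy.symm] using hcy
    have h2' : ∀ z ∈ l, z = x ∨ z = y := fun z hz => h2 z (by simp [hz])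
    have hpre' : ∀ p, p <+: l → p.count y ≤ p.count x ∧ p.count x ≤ p.count y + 1 := by
      intro p hp
      have hpp : (x :: y :: p) <+: (x :: y :: l) := by
        rw [List.cons_prefix_cons, List.cons_prefix_cons]
        exact ⟨rfl, rfl, hp⟩
      have := hpre _ hpp
      simp only [List.count_cons, beq_iff_eq, hxy, hxy.symm, beq_self_eq_true, if_true,
        if_false] at this
      omega
    have := ih l h2' hcx' hcy' hpre'
    rw [this]; rfl

/-- Every prefix of `l.filter f` is the `f`-filtering of some prefix of `l`. -/
lemma exists_take_of_prefix_filter (f : V → Bool) :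
    ∀ (l : List V) (p : List V), p <+: l.filter f → ∃ m, p = (l.take m).filter f := by
  intro l
  induction l with
  | nil => intro p hp; rw [List.filter_nil, List.prefix_nil] at hp; exact ⟨0, by simp [hp]⟩
  | cons z l ih =>
    intro p hp
    by_cases hz : f z
    · rw [List.filter_cons_of_pos hz] at hp
      rcases p with _ | ⟨c, p⟩
      · exact ⟨0, by simp⟩
      · rw [List.cons_prefix_cons] at hp
        obtain ⟨rfl, hp⟩ := hp
        obtain ⟨m, hm⟩ := ih p hp
        exact ⟨m + 1, by simp [List.take_succ_cons, List.filter_cons_of_pos hz, hm]⟩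
    · rw [List.filter_cons_of_neg (by simpa using hz)] at hp
      obtain ⟨m, hm⟩ := ih p hp
      exact ⟨m + 1, by simp [List.take_succ_cons, List.filter_cons_of_neg (by simpa using hz), hm]⟩

/-- Rotating an even perfectly-alternating word keeps it alternating. -/
lemma rot_chain {x y : V} (hxy : x ≠ y) (k : ℕ) (l₁ l₂ : List V)
    (h : l₁ ++ l₂ = altRep x y k) : List.Chain' (· ≠ ·) (l₂ ++ l₁) := by
  have hch : List.Chain' (· ≠ ·) (l₁ ++ l₂) := by rw [h]; exact altRep_chain' hxy k
  unfold List.Chain' at hch ⊢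
  rw [List.isChain_append] at hch ⊢
  refine ⟨hch.2.1, hch.1, ?_⟩
  intro a ha b hb
  rcases l₂ with _ | ⟨c, l₂⟩
  · simp at ha
  rcases l₁ with _ | ⟨d, l₁⟩
  · simp at hb
  rcases k with _ | k
  · exact absurd h (by simp [altRep])
  have hlast : a = y := by
    have h1 : (c :: l₂).getLast? = some y := by
      rw [← List.getLast?_append_of_ne_nil (d :: l₁) (List.cons_ne_nil c l₂), h,
        altRep_getLast?]
    rw [h1] at ha
    simpa using ha.symm
  have hhead : b = x := by
    have h1 : (d :: l₁).head? = some x := by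
      rw [← List.head?_append_of_ne_nil (d :: l₁) (l₂ := c :: l₂) (List.cons_ne_nil d l₁), h,
        altRep_head?]
    rw [h1] at hb
    simpa using hb.symm
  rw [hlast, hhead]
  exact hxy.symm

/-- Alternation is preserved by a cyclic shift (for letters with equal counts). -/
lemma alternate_rot {x y : V} (hxy : x ≠ y) (α β : List V)
    (hc : (α ++ β).count x = (α ++ β).count y)
    (h : Alternate (α ++ β) x y) : Alternate (β ++ α) x y := by
  unfold Alternate at h ⊢
  rw [List.filter_append] at h ⊢
  have hcx : (α.filter (fun z => decide (z = x ∨ z = y))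
      ++ β.filter (fun z => decide (z = x ∨ z = y))).count x = (α ++ β).count x := by
    rw [← List.filter_append, count_filter_or_left]
  have hcy : (α.filter (fun z => decide (z = x ∨ z = y))
      ++ β.filter (fun z => decide (z = x ∨ z = y))).count y = (α ++ β).count y := by
    rw [← List.filter_append, count_filter_or_right]
  have h2 : ∀ z ∈ α.filter (fun z => decide (z = x ∨ z = y))
      ++ β.filter (fun z => decide (z = x ∨ z = y)), z = x ∨ z = y := by
    intro z hz
    rw [← List.filter_append] at hz
    simpa using (List.mem_filter.mp hz).2
  rcases alt_struct hxy ((α ++ β).count x) _ h2 hcx (by rw [hcy, ← hc]) h with hs | hs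
  · exact rot_chain hxy _ _ _ hs
  · exact rot_chain hxy.symm _ _ _ hs

lemma prefix_append_cases {p l₁ l₂ : List V} (h : p <+: l₁ ++ l₂) :
    p <+: l₁ ∨ ∃ q, p = l₁ ++ q ∧ q <+: l₂ := by
  obtain ⟨t, ht⟩ := h
  rcases List.append_eq_append_iff.mp ht with ⟨a', h1, _⟩ | ⟨c', h1, h2⟩
  · exact Or.inl ⟨a', h1.symm⟩
  · exact Or.inr ⟨c', h1, ⟨t, h2.symm⟩⟩

/-- In a prefix of a concatenation of permutations, counts of two letters differ by
at most one. -/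
lemma count_prefix_flatten_le (t s : V) :
    ∀ (L : List (List V)), (∀ B ∈ L, B.count t = 1 ∧ B.count s = 1) →
      ∀ p, p <+: L.flatten → p.count t ≤ p.count s + 1 := by
  intro L
  induction L with
  | nil => intro _ p hp; rw [List.flatten_nil, List.prefix_nil] at hp; simp [hp]
  | cons B L ih =>
    intro hB p hp
    rw [List.flatten_cons] at hp
    rcases prefix_append_cases hp with hp | ⟨q, rfl, hq⟩
    · have h1 : p.count t ≤ B.count t := hp.count_le t
      have h2 := (hB B (by simp)).1
      omega
    · have h1 := (hB B (by simp)).1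
      have h2 := (hB B (by simp)).2
      have h3 := ih (fun B' hB' => hB B' (by simp [hB'])) q hq
      rw [List.count_append, List.count_append]
      omega

/-- If `la` is never the first letter of a block, then in every prefix of the
concatenation some other letter is at least as frequent as `la`. -/
lemma headcount (la b₀ : V) (A : Finset V) (hb₀A : b₀ ∈ A) (hb₀ : b₀ ≠ la) (hlaA : la ∈ A) :
    ∀ (L : List (List V)),
      (∀ B ∈ L, (∀ x ∈ A, B.count x = 1) ∧ (∀ z ∈ B, z ∈ A) ∧ B.head? ≠ some la) →
      ∀ p, p <+: L.flatten → ∃ b, b ∈ A ∧ b ≠ la ∧ p.count la ≤ p.count b := by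
  intro L
  induction L with
  | nil =>
    intro _ p hp
    rw [List.flatten_nil, List.prefix_nil] at hp
    exact ⟨b₀, hb₀A, hb₀, by simp [hp]⟩
  | cons B L ih =>
    intro hB p hp
    rw [List.flatten_cons] at hp
    rcases prefix_append_cases hp with hp | ⟨q, rfl, hq⟩
    · by_cases hla : la ∈ p
      · rcases p with _ | ⟨c, p⟩
        · simp at hla
        obtain ⟨tt, htt⟩ := hp
        have hcB : B.head? = some c := by rw [← htt]; rfl
        have hcA : c ∈ B := by rw [← htt]; simp
        refine ⟨c, (hB B (by simp)).2.1 c hcA, ?_, ?_⟩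
        · intro hcla; exact (hB B (by simp)).2.2 (by rw [hcB, hcla])
        · have h1 : (c :: p).count la ≤ B.count la := List.IsPrefix.count_le la ⟨tt, htt⟩
          have h2 : B.count la = 1 := (hB B (by simp)).1 la hlaA
          have h3 : 0 < (c :: p).count c := List.count_pos_iff.mpr (by simp)
          omega
      · exact ⟨b₀, hb₀A, hb₀, by rw [List.count_eq_zero.mpr hla]; omega⟩
    · obtain ⟨b, hbA, hbla, hble⟩ := ih (fun B' hB' => hB B' (by simp [hB'])) q hq
      have h1 : B.count la = 1 := (hB B (by simp)).1 la hlaA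
      have h2 : B.count b = 1 := (hB B (by simp)).1 b hbA
      refine ⟨b, hbA, hbla, ?_⟩
      rw [List.count_append, List.count_append]
      omega

/-- If `la` is never the last letter of a block, then in every prefix of the
concatenation some other letter is at most as frequent as `la`. -/
lemma lastcount (la b₀ : V) (A : Finset V) (hb₀A : b₀ ∈ A) (hb₀ : b₀ ≠ la) (hlaA : la ∈ A) :
    ∀ (L : List (List V)),
      (∀ B ∈ L, (∀ x ∈ A, B.count x = 1) ∧ (∀ z ∈ B, z ∈ A) ∧ B.getLast? ≠ some la) →
      ∀ p, p <+: L.flatten → ∃ b, b ∈ A ∧ b ≠ la ∧ p.count b ≤ p.count la := by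
  intro L
  induction L with
  | nil =>
    intro _ p hp
    rw [List.flatten_nil, List.prefix_nil] at hp
    exact ⟨b₀, hb₀A, hb₀, by simp [hp]⟩
  | cons B L ih =>
    intro hB p hp
    rw [List.flatten_cons] at hp
    rcases prefix_append_cases hp with hp | ⟨q, rfl, hq⟩
    · have hBne : B ≠ [] := by
        intro h
        have := (hB B (by simp)).1 la hlaA
        rw [h] at this
        simp at this
      set b := B.getLast hBne with hbdef
      have hbB : b ∈ B := List.getLast_mem hBne
      have hbA : b ∈ A := (hB B (by simp)).2.1 b hbB
      have hbla : b ≠ la := by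
        intro h
        exact (hB B (by simp)).2.2 (by rw [List.getLast?_eq_getLast hBne, ← hbdef, h])
      by_cases hla : la ∈ p
      · have h1 : p.count b ≤ B.count b := hp.count_le b
        have h2 : B.count b = 1 := (hB B (by simp)).1 b hbA
        have h3 : 0 < p.count la := List.count_pos_iff.mpr hla
        exact ⟨b, hbA, hbla, by omega⟩
      · obtain ⟨tt, htt⟩ := hp
        rcases tt with _ | ⟨c, tt⟩
        · exfalso
          apply hla
          have : p = B := by rw [← htt]; simp
          rw [this]
          have := (hB B (by simp)).1 la hlaA
          exact List.count_pos_iff.mp (by omega)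
        · have hdrop : B.dropLast = p ++ (c :: tt).dropLast := by
            rw [← htt]; exact List.dropLast_append_cons
          have hcount : B.count b = B.dropLast.count b + 1 := by
            conv_lhs => rw [← List.dropLast_append_getLast hBne]
            rw [List.count_append, ← hbdef]
            simp
          have h1 : B.count b = 1 := (hB B (by simp)).1 b hbA
          have h2 : p.count b ≤ B.dropLast.count b :=
            List.IsPrefix.count_le b ⟨(c :: tt).dropLast, hdrop.symm⟩
          exact ⟨b, hbA, hbla, by rw [List.count_eq_zero.mpr hla]; omega⟩
    · obtain ⟨b, hbA, hbla, hble⟩ := ih (fun B' hB' => hB B' (by simp [hB'])) q hq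
      have h1 : B.count la = 1 := (hB B (by simp)).1 la hlaA
      have h2 : B.count b = 1 := (hB B (by simp)).1 b hbA
      refine ⟨b, hbA, hbla, ?_⟩
      rw [List.count_append, List.count_append]
      omega

lemma crown_adj_inl_inr {n : ℕ} (i j : Fin n) :
    (Crown n).Adj (Sum.inl i) (Sum.inr j) ↔ i ≠ j := by
  rw [Crown, SimpleGraph.fromRel_adj]
  show Sum.inl i ≠ Sum.inr j ∧ (i ≠ j ∨ False) ↔ i ≠ j
  simp

lemma crown_not_adj_inl_inl {n : ℕ} (i j : Fin n) :
    ¬ (Crown n).Adj (Sum.inl i) (Sum.inl j) := by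
  rw [Crown, SimpleGraph.fromRel_adj]
  show ¬ (Sum.inl i ≠ Sum.inl j ∧ (False ∨ False))
  simp

lemma crown_not_adj_inr_inl_self {n : ℕ} (i : Fin n) :
    ¬ (Crown n).Adj (Sum.inr i) (Sum.inl i) := by
  rw [Crown, SimpleGraph.fromRel_adj]
  show ¬ (Sum.inr i ≠ Sum.inl i ∧ (False ∨ i ≠ i))
  simp

lemma crown_not_adj_inl_inr_self {n : ℕ} (i : Fin n) :
    ¬ (Crown n).Adj (Sum.inl i) (Sum.inr i) := by
  rw [Crown, SimpleGraph.fromRel_adj]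
  show ¬ (Sum.inl i ≠ Sum.inr i ∧ (i ≠ i ∨ False))
  simp

lemma mem_leftSet_iff {n : ℕ} (z : Fin n ⊕ Fin n) :
    z ∈ leftSet n ↔ ∃ i, z = Sum.inl i := by
  cases z <;> simp [leftSet]

/-- The combinatorial core of Lemma 3, for a generic alphabet. -/
lemma crown_core (k : ℕ) (w u u' : List V) (A : Finset V) (la ra b₀ : V)
    (hlaA : la ∈ A) (hraA : ra ∉ A) (hb₀A : b₀ ∈ A) (hb₀la : b₀ ≠ la)
    (hk : ∀ v : V, w.count v = k) (hmem : la ∈ w) (hw : w = u ++ u')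
    (L : List (List V))
    (hblock : ∀ B ∈ L, (∀ x ∈ A, B.count x = 1) ∧ (∀ z ∈ B, z ∈ A) ∧
      B.head? ≠ some la ∧ B.getLast? ≠ some la)
    (hind : ((u' ++ u).filter fun z => decide (z ∈ A)) = L.flatten)
    (haltTS : ∀ b ∈ A, b ≠ la → Alternate w b ra)
    (hnoalt1 : ¬ Alternate w la ra)
    (hnoalt2 : ¬ Alternate w ra la)
    (hnoalt3 : ∀ t ∈ A, ∀ s ∈ A, t ≠ s → ¬ Alternate w t s) : False := by
  have hlara : la ≠ ra := fun h => hraA (h ▸ hlaA)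
  set w' : List V := u' ++ u with hw'_def
  have hcnt : ∀ v : V, w'.count v = k := by
    intro v
    have h1 := hk v
    rw [hw, count_append'] at h1
    rw [hw'_def, count_append']
    omega
  have hk1 : 1 ≤ k := by
    have h0 : 0 < w.count la := count_pos'.mpr hmem
    have := hk la
    omega
  have hind' : (w'.filter fun z => decide (z ∈ A)) = L.flatten := hind
  have hAprefix : ∀ m : ℕ,
      ((w'.take m).filter fun z => decide (z ∈ A)) <+: L.flatten := by
    intro m
    rw [← hind']
    exact List.IsPrefix.filter _ (List.take_prefix m w')
  have hAcount : ∀ x : V, x ∈ A → ∀ m : ℕ,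
      ((w'.take m).filter fun z => decide (z ∈ A)).count x = (w'.take m).count x := by
    intro x hx m
    exact count_filter'' (fun z => decide (z ∈ A)) (by simpa using hx) _
  have hdiff : ∀ t s : V, t ∈ A → s ∈ A → ∀ m : ℕ,
      (w'.take m).count t ≤ (w'.take m).count s + 1 := by
    intro t s ht hs m
    have := count_prefix_flatten_le t s L
      (fun B hB => ⟨(hblock B hB).1 t ht, (hblock B hB).1 s hs⟩) _ (hAprefix m)
    rwa [hAcount t ht m, hAcount s hs m] at this
  have hhead : ∀ m : ℕ, ∃ b, b ∈ A ∧ b ≠ la ∧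
      (w'.take m).count la ≤ (w'.take m).count b := by
    intro m
    obtain ⟨b, hbA, hbla, hble⟩ := headcount la b₀ A hb₀A hb₀la hlaA L
      (fun B hB => ⟨(hblock B hB).1, (hblock B hB).2.1, (hblock B hB).2.2.1⟩) _ (hAprefix m)
    rw [hAcount la hlaA m, hAcount b hbA m] at hble
    exact ⟨b, hbA, hbla, hble⟩
  have hlast : ∀ m : ℕ, ∃ b, b ∈ A ∧ b ≠ la ∧
      (w'.take m).count b ≤ (w'.take m).count la := by
    intro m
    obtain ⟨b, hbA, hbla, hble⟩ := lastcount la b₀ A hb₀A hb₀la hlaA L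
      (fun B hB => ⟨(hblock B hB).1, (hblock B hB).2.1, (hblock B hB).2.2.2⟩) _ (hAprefix m)
    rw [hAcount la hlaA m, hAcount b hbA m] at hble
    exact ⟨b, hbA, hbla, hble⟩
  -- every other letter of `A` alternates with `ra` in `w'`
  have hTS : ∀ b : V, b ∈ A → b ≠ la →
      (w'.filter fun z => decide (z = b ∨ z = ra)) = altRep b ra k ∨
      (w'.filter fun z => decide (z = b ∨ z = ra)) = altRep ra b k := by
    intro b hbA hbla
    have hbra : b ≠ ra := fun h => hraA (h ▸ hbA)
    have halt : Alternate w b ra := haltTS b hbA hbla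
    rw [hw] at halt
    have halt' : Alternate w' b ra := by
      rw [hw'_def]
      exact alternate_rot hbra u u' (by rw [← hw, hk b, hk ra]) halt
    unfold Alternate at halt'
    have hcb : (w'.filter fun z => decide (z = b ∨ z = ra)).count b = k := by
      rw [count_filter_or_left, hcnt]
    have hcr : (w'.filter fun z => decide (z = b ∨ z = ra)).count ra = k := by
      rw [count_filter_or_right, hcnt]
    have h2 : ∀ z ∈ w'.filter fun z => decide (z = b ∨ z = ra), z = b ∨ z = ra := by
      intro z hz
      simpa using (List.mem_filter.mp hz).2
    exact alt_struct hbra k _ h2 hcb hcr halt'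
  have hTineq : ∀ b : V, b ≠ ra →
      (w'.filter fun z => decide (z = b ∨ z = ra)) = altRep b ra k →
      ∀ m : ℕ, (w'.take m).count ra ≤ (w'.take m).count b ∧
        (w'.take m).count b ≤ (w'.take m).count ra + 1 := by
    intro b hbra hT m
    have hpre : ((w'.take m).filter fun z => decide (z = b ∨ z = ra)) <+: altRep b ra k := by
      rw [← hT]
      exact List.IsPrefix.filter _ (List.take_prefix m w')
    have := altRep_prefix_count hbra k _ hpre
    rwa [count_filter_or_left b ra, count_filter_or_right b ra] at this
  have hSineq : ∀ b : V, b ≠ ra →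
      (w'.filter fun z => decide (z = b ∨ z = ra)) = altRep ra b k →
      ∀ m : ℕ, (w'.take m).count b ≤ (w'.take m).count ra ∧
        (w'.take m).count ra ≤ (w'.take m).count b + 1 := by
    intro b hbra hS m
    have hpre : ((w'.take m).filter fun z => decide (z = b ∨ z = ra)) <+: altRep ra b k := by
      rw [← hS]
      exact List.IsPrefix.filter _ (List.take_prefix m w')
    have h1 : ((w'.take m).filter fun z => decide (z = b ∨ z = ra)) <+: altRep ra b k := hpre
    have := altRep_prefix_count (Ne.symm hbra) k _ h1
    rwa [count_filter_or_left b ra, count_filter_or_right b ra] at this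
  have hfinish : ∀ x y : V, x ≠ y →
      (∀ m : ℕ, (w'.take m).count y ≤ (w'.take m).count x ∧
        (w'.take m).count x ≤ (w'.take m).count y + 1) →
      Alternate w x y := by
    intro x y hxy hineq
    have h2 : ∀ z ∈ w'.filter fun z => decide (z = x ∨ z = y), z = x ∨ z = y := by
      intro z hz
      simpa using (List.mem_filter.mp hz).2
    have hcx : (w'.filter fun z => decide (z = x ∨ z = y)).count x = k := by
      rw [count_filter_or_left, hcnt]
    have hcy : (w'.filter fun z => decide (z = x ∨ z = y)).count y = k := by
      rw [count_filter_or_right, hcnt]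
    have hpre : ∀ p, p <+: (w'.filter fun z => decide (z = x ∨ z = y)) →
        p.count y ≤ p.count x ∧ p.count x ≤ p.count y + 1 := by
      intro p hp
      obtain ⟨m, rfl⟩ := exists_take_of_prefix_filter _ w' p hp
      rw [count_filter_or_left x y, count_filter_or_right x y]
      exact hineq m
    have hstruct := alt_criterion hxy k _ h2 hcx hcy hpre
    have halt' : Alternate w' x y := by
      unfold Alternate
      rw [hstruct]
      exact altRep_chain' hxy k
    rw [hw]
    rw [hw'_def] at halt'
    exact alternate_rot hxy u' u (by rw [← hw'_def, hcnt x, hcnt y]) halt'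
  by_cases hT : ∃ t, t ∈ A ∧ t ≠ la ∧
      (w'.filter fun z => decide (z = t ∨ z = ra)) = altRep t ra k
  · by_cases hS : ∃ s, s ∈ A ∧ s ≠ la ∧
        (w'.filter fun z => decide (z = s ∨ z = ra)) = altRep ra s k
    · -- mixed case: two letters of `A` would alternate in `w`
      obtain ⟨t, htA, htla, hTt⟩ := hT
      obtain ⟨s, hsA, hsla, hSs⟩ := hS
      have htra : t ≠ ra := fun h => hraA (h ▸ htA)
      have hsra : s ≠ ra := fun h => hraA (h ▸ hsA)
      have hts : t ≠ s := by
        rintro rfl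
        have heq : altRep t ra k = altRep ra t k := hTt.symm.trans hSs
        obtain ⟨k', rfl⟩ : ∃ k', k = k' + 1 := ⟨k - 1, by omega⟩
        rw [altRep, altRep] at heq
        exact htra (List.cons_eq_cons.mp heq).1
      have hineq : ∀ m : ℕ, (w'.take m).count s ≤ (w'.take m).count t ∧
          (w'.take m).count t ≤ (w'.take m).count s + 1 := by
        intro m
        have h1 := hTineq t htra hTt m
        have h2 := hSineq s hsra hSs m
        have h3 := hdiff t s htA hsA m
        exact ⟨le_trans h2.1 h1.1, h3⟩
      exact hnoalt3 t htA s hsA hts (hfinish t s hts hineq)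
    · -- pure T case: `la` and `ra` would alternate
      push_neg at hS
      have hallT : ∀ b : V, b ∈ A → b ≠ la →
          (w'.filter fun z => decide (z = b ∨ z = ra)) = altRep b ra k := by
        intro b hbA hbla
        rcases hTS b hbA hbla with h | h
        · exact h
        · exact absurd h (hS b hbA hbla)
      have hineq : ∀ m : ℕ, (w'.take m).count ra ≤ (w'.take m).count la ∧
          (w'.take m).count la ≤ (w'.take m).count ra + 1 := by
        intro m
        constructor
        · obtain ⟨b, hbA, hbla, hble⟩ := hlast m
          have hbra : b ≠ ra := fun h => hraA (h ▸ hbA)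
          have := (hTineq b hbra (hallT b hbA hbla) m).1
          omega
        · obtain ⟨b, hbA, hbla, hble⟩ := hhead m
          have hbra : b ≠ ra := fun h => hraA (h ▸ hbA)
          have := (hTineq b hbra (hallT b hbA hbla) m).2
          omega
      exact hnoalt1 (hfinish la ra hlara hineq)
  · -- pure S case: `ra` and `la` would alternate
    push_neg at hT
    have hallS : ∀ b : V, b ∈ A → b ≠ la →
        (w'.filter fun z => decide (z = b ∨ z = ra)) = altRep ra b k := by
      intro b hbA hbla
      rcases hTS b hbA hbla with h | h
      · exact absurd h (hT b hbA hbla)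
      · exact h
    have hineq : ∀ m : ℕ, (w'.take m).count la ≤ (w'.take m).count ra ∧
        (w'.take m).count ra ≤ (w'.take m).count la + 1 := by
      intro m
      constructor
      · obtain ⟨b, hbA, hbla, hble⟩ := hhead m
        have hbra : b ≠ ra := fun h => hraA (h ▸ hbA)
        have := (hSineq b hbra (hallS b hbA hbla) m).1
        omega
      · obtain ⟨b, hbA, hbla, hble⟩ := hlast m
        have hbra : b ≠ ra := fun h => hraA (h ▸ hbA)
        have := (hSineq b hbra (hallS b hbA hbla) m).2
        omega
    exact hnoalt2 (hfinish ra la hlara.symm hineq)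

end CrownAux

/-- Lemma 3 of the paper: let `n ≥ 5` and let `w` be a `k`-uniform word
representing `H_{n,n}` such that some cyclic shift of `w` has its subword induced
by `A = {1, …, n}` equal to a concatenation `P′₁ ⋯ P′_k` of permutations of `A`.
Then every `a ∈ A` is the first or the last letter of some `P′_j`. -/
theorem crown_first_or_last (n k : ℕ) (hn : 5 ≤ n)
    (w : List (Fin n ⊕ Fin n)) (hk : IsUniform w k) (hrep : Represents w (Crown n))
    (u u' : List (Fin n ⊕ Fin n)) (hw : w = u ++ u')
    (P : Fin k → List (Fin n ⊕ Fin n))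
    (hP : ∀ i, IsPermOf (P i) (leftSet n))
    (hind : ((u' ++ u).filter fun z => decide (z ∈ leftSet n)) = (List.ofFn P).flatten) :
    ∀ a : Fin n, ∃ j : Fin k,
      (P j).head? = some (Sum.inl a) ∨ (P j).getLast? = some (Sum.inl a) := by
  classical
  intro a
  by_contra hcon
  push_neg at hcon
  obtain ⟨a₁, ha₁⟩ : ∃ a₁ : Fin n, a₁ ≠ a := by
    rcases eq_or_ne a ⟨0, by omega⟩ with h | h
    · exact ⟨⟨1, by omega⟩, by rw [h]; simp [Fin.ext_iff]⟩
    · exact ⟨⟨0, by omega⟩, fun hh => h hh.symm⟩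
  refine CrownAux.crown_core k w u u' (leftSet n) (Sum.inl a) (Sum.inr a) (Sum.inl a₁)
    (by simp [leftSet]) (by simp [leftSet]) (by simp [leftSet])
    (by simp [ha₁]) hk (hrep.1 _) hw (List.ofFn P) ?_ hind ?_ ?_ ?_ ?_
  · intro B hB
    rw [List.mem_ofFn] at hB
    obtain ⟨j, rfl⟩ := hB
    exact ⟨(hP j).1, (hP j).2, (hcon j).1, (hcon j).2⟩
  · intro b hbA hbla
    obtain ⟨b₁, rfl⟩ := (CrownAux.mem_leftSet_iff b).mp hbA
    have hb₁a : b₁ ≠ a := fun h => hbla (by rw [h])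
    have hadj : (Crown n).Adj (Sum.inl b₁) (Sum.inr a) :=
      (CrownAux.crown_adj_inl_inr b₁ a).mpr hb₁a
    exact (hrep.2 _ _ (by simp)).mp hadj
  · intro halt
    exact CrownAux.crown_not_adj_inl_inr_self a ((hrep.2 _ _ (by simp)).mpr halt)
  · intro halt
    exact CrownAux.crown_not_adj_inr_inl_self a ((hrep.2 _ _ (by simp)).mpr halt)
  · intro t htA s hsA hts halt
    have hadj := (hrep.2 t s hts).mpr halt
    obtain ⟨t₁, rfl⟩ := (CrownAux.mem_leftSet_iff t).mp htA
    obtain ⟨s₁, rfl⟩ := (CrownAux.mem_leftSet_iff s).mp hsA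
    exact CrownAux.crown_not_adj_inl_inl t₁ s₁ hadj
end

section
/- Let n ≥ 2 and k ≥ 2. Let Q₁, …, Q_k be words each containing every element of {1, …, n} exactly once, and let R₁, …, R_k be words each containing every element of {1′, …, n′} exactly once. Suppose that for all distinct x, y ∈ {1, …, n} there exist i, j with x before y in Q_i and y before x in Q_j, and likewise for all distinct x′, y′ ∈ {1′, …, n′} there exist i, j with x′ before y′ in R_i and y′ before x′ in R_j. Then the concatenation Q₁R₁Q₂R₂⋯Q_kR_k is a k-uniform word representing the complete bipartite graph K_{n,n} with parts {1, …, n} and {1′, …, n′}. -/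
/-- The "right" part `{1′, …, n′}` of the vertex set `Fin n ⊕ Fin n`. -/
def rightSet (n : ℕ) : Finset (Fin n ⊕ Fin n) :=
  Finset.univ.filter fun z => z.isRight

/-- The complete bipartite graph `K_{n,n}` with parts `{1, …, n}` and `{1′, …, n′}`. -/
def CompleteBip (n : ℕ) : SimpleGraph (Fin n ⊕ Fin n) :=
  SimpleGraph.fromRel fun x y => x.isLeft ∧ y.isRight


section Helpers
variable {α : Type*} [DecidableEq α]

lemma filter_eq_single (l : List α) (p : α → Bool) (c : α)
    (h1 : l.count c = 1) (hpc : p c = true)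
    (h2 : ∀ z ∈ l, p z = true → z = c) : l.filter p = [c] := by
  have hall : ∀ z ∈ l.filter p, z = c := fun z hz =>
    h2 z (List.mem_of_mem_filter hz) (List.of_mem_filter hz)
  have hrep := List.eq_replicate_of_mem hall
  have hc : (l.filter p).count c = 1 := by rw [List.count_filter hpc]; exact h1
  rw [hrep] at hc ⊢
  rw [List.count_replicate_self] at hc
  rw [hc]
  rfl

lemma filter_eq_pair (l : List α) (p : α → Bool) (x y : α) (hxy : x ≠ y)
    (hcx : l.count x = 1) (hcy : l.count y = 1)
    (hpx : p x = true) (hpy : p y = true)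
    (hall : ∀ z ∈ l, p z = true → z = x ∨ z = y) :
    l.filter p = [x, y] ∨ l.filter p = [y, x] := by
  have hmem : ∀ z ∈ l.filter p, z = x ∨ z = y := fun z hz =>
    hall z (List.mem_of_mem_filter hz) (List.of_mem_filter hz)
  have hmx : (l.filter p).count x = 1 := by rw [List.count_filter hpx]; exact hcx
  have hmy : (l.filter p).count y = 1 := by rw [List.count_filter hpy]; exact hcy
  have hlen : (l.filter p).length = 2 := by
    have hsplit := List.length_eq_countP_add_countP (fun z => z == x) (l := l.filter p)
    have e1 : (l.filter p).countP (fun z => z == x) = 1 := by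
      rw [← List.count]; exact hmx
    have e2 : (l.filter p).countP (fun a => decide ¬((a == x) = true)) = 1 := by
      rw [List.countP_congr (q := fun z => z == y) ?_]
      · rw [← List.count]; exact hmy
      · intro a ha
        rcases hmem a ha with rfl | rfl
        · simp [hxy]
        · simp [Ne.symm hxy]
    omega
  obtain ⟨a, b, hab⟩ := List.length_eq_two.mp hlen
  rw [hab] at hmx hmy hmem ⊢
  have ha := hmem a (by simp)
  have hb := hmem b (by simp)
  rcases ha with rfl | rfl <;> rcases hb with rfl | rfl
  · simp [List.count_cons] at hmx
  · exact Or.inl rfl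
  · exact Or.inr rfl
  · simp [List.count_cons] at hmy

lemma indexOf_lt_of_filter_pair : ∀ (l : List α) (p : α → Bool) (x y : α), x ≠ y →
    l.filter p = [x, y] → l.idxOf x < l.idxOf y
  | [], p, x, y, hxy, h => by simp at h
  | a :: t, p, x, y, hxy, h => by
    have hpx : p x = true := List.of_mem_filter (show x ∈ List.filter p (a :: t) by rw [h]; simp)
    have hpy : p y = true := List.of_mem_filter (show y ∈ List.filter p (a :: t) by rw [h]; simp)
    by_cases hpa : p a = true
    · rw [List.filter_cons, if_pos hpa] at h
      simp only [List.cons.injEq] at h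
      obtain ⟨rfl, ht⟩ := h
      rw [List.idxOf_cons_self, List.idxOf_cons_ne t hxy]
      exact Nat.succ_pos _
    · rw [List.filter_cons, if_neg hpa] at h
      have hax : a ≠ x := fun e => hpa (e ▸ hpx)
      have hay : a ≠ y := fun e => hpa (e ▸ hpy)
      rw [List.idxOf_cons_ne t hax, List.idxOf_cons_ne t hay]
      exact Nat.succ_lt_succ (indexOf_lt_of_filter_pair t p x y hxy h)

lemma adjacent_infix_flatten :
    ∀ (m k : ℕ) (g : Fin k → List α) (h : m + 1 < k),
    (g ⟨m, Nat.lt_of_succ_lt h⟩ ++ g ⟨m + 1, h⟩) <:+: (List.ofFn g).flatten := by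
  intro m
  induction m with
  | zero =>
    intro k g h
    match k, h with
    | (k' + 2), h =>
      rw [List.ofFn_succ, List.ofFn_succ, List.flatten_cons, List.flatten_cons]
      refine ⟨[], (List.ofFn fun i : Fin k' => g i.succ.succ).flatten, ?_⟩
      simp [List.append_assoc]
  | succ m ih =>
    intro k g h
    match k, h with
    | (k' + 1), h =>
      have h' : m + 1 < k' := Nat.lt_of_succ_lt_succ h
      have hi := ih k' (fun i => g i.succ) h'
      rw [List.ofFn_succ, List.flatten_cons]
      exact hi.trans (List.suffix_append _ _).isInfix

lemma exists_adj_ne {k : ℕ} (g : Fin k → α) {i j : Fin k} (h : g i ≠ g j) :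
    ∃ m : ℕ, ∃ hm : m + 1 < k, g ⟨m, Nat.lt_of_succ_lt hm⟩ ≠ g ⟨m + 1, hm⟩ := by
  by_contra hc
  push_neg at hc
  have hconst : ∀ m (hm : m < k), g ⟨m, hm⟩ = g ⟨0, Nat.lt_of_le_of_lt (Nat.zero_le m) hm⟩ := by
    intro m
    induction m with
    | zero => intro _; rfl
    | succ m ihm => intro hm; rw [← hc m hm]; exact ihm (Nat.lt_of_succ_lt hm)
  apply h
  have hi := hconst i.1 i.2
  have hj := hconst j.1 j.2
  simp only [Fin.eta] at hi hj
  rw [hi, hj]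

lemma chain'_flatten_replicate_pair (x y : α) (hxy : x ≠ y) :
    ∀ m : ℕ, ((List.replicate m [x, y]).flatten).Chain' (· ≠ ·) ∧
      ∀ z ∈ ((List.replicate m [x, y]).flatten).head?, z = x := by
  intro m
  induction m with
  | zero => simp [List.Chain', List.isChain_nil]
  | succ m ih =>
    rw [List.replicate_succ, List.flatten_cons]
    constructor
    · show List.IsChain _ (x :: y :: _)
      rw [List.isChain_cons_cons]
      refine ⟨hxy, ?_⟩
      rw [List.isChain_cons]
      exact ⟨fun z hz => by rw [ih.2 z hz]; exact Ne.symm hxy, ih.1⟩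
    · intro z hz
      simp at hz
      exact hz.symm

lemma not_chain'_flatten (k : ℕ) (F : Fin k → List α) (x y : α) (hxy : x ≠ y)
    (hF : ∀ i, F i = [x, y] ∨ F i = [y, x]) {i j : Fin k} (hij : F i ≠ F j) :
    ¬ ((List.ofFn F).flatten).Chain' (· ≠ ·) := by
  obtain ⟨m, hm, hne⟩ := exists_adj_ne F hij
  intro hch
  have hinf := adjacent_infix_flatten m k F hm
  have hch2 := hch.infix hinf
  rcases hF ⟨m, Nat.lt_of_succ_lt hm⟩ with h1 | h1 <;> rcases hF ⟨m + 1, hm⟩ with h2 | h2 <;>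
      rw [h1, h2] at hch2 hne <;>
    simp [List.Chain', List.isChain_cons_cons, hxy, Ne.symm hxy] at hch2 hne

lemma alternate_comm' (w : List α) (x y : α) :
    (w.filter fun z => decide (z = x ∨ z = y)) = (w.filter fun z => decide (z = y ∨ z = x)) := by
  congr 1
  funext z
  exact decide_eq_decide.mpr or_comm


lemma count_eq_zero'' {a : α} {l : List α} (h : a ∉ l) : l.count a = 0 :=
  List.count_eq_zero.mpr h

lemma mem_of_count_pos' {a : α} {l : List α} (h : 0 < l.count a) : a ∈ l :=
  List.count_pos_iff.mp h

lemma beq_congr (inst : BEq α) (linst : @LawfulBEq α inst) (a v : α) :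
    @BEq.beq _ inst a v = @BEq.beq _ instBEqOfDecidableEq a v := by
  by_cases h : a = v
  · subst h
    rw [@beq_self_eq_true _ inst linst.toReflBEq, @beq_self_eq_true _ instBEqOfDecidableEq (by infer_instance)]
  · rw [(@beq_eq_false_iff_ne _ inst linst _ _).mpr h,
      (@beq_eq_false_iff_ne _ instBEqOfDecidableEq (by infer_instance) _ _).mpr h]

lemma indexOf_instance_congr (inst : BEq α) (linst : @LawfulBEq α inst) (v : α) :
    ∀ (l : List α), @List.idxOf α inst v l = @List.idxOf α instBEqOfDecidableEq v l := by
  intro l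
  induction l with
  | nil => rfl
  | cons a t ih =>
    rw [@List.idxOf_cons α a t v inst, @List.idxOf_cons α a t v instBEqOfDecidableEq, ih,
      beq_congr inst linst]

lemma sumLawfulBEq_s13 (n : ℕ) : @LawfulBEq (Fin n ⊕ Fin n) Sum.instBEq := by
  refine @LawfulBEq.mk _ _ (ReflBEq.mk ?r) ?e
  rotate_left
  · intro a b h
    cases a <;> cases b
    case inl.inl a b => have h' : (a == b) = true := h; rw [eq_of_beq h']
    case inl.inr a b => exact Bool.noConfusion (h : false = true)
    case inr.inl a b => exact Bool.noConfusion (h : false = true)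
    case inr.inr a b => have h' : (a == b) = true := h; rw [eq_of_beq h']
  · intro a
    cases a
    case inl a => show (a == a) = true; simp
    case inr a => show (a == a) = true; simp


end Helpers

/-- If `Q₁, …, Q_k` are permutations of `{1, …, n}` and `R₁, …, R_k` are
permutations of `{1′, …, n′}` such that within each part every ordered pair of
distinct letters is inverted in some permutation, then `Q₁R₁Q₂R₂⋯Q_kR_k` is a
`k`-uniform word representing `K_{n,n}`. -/
theorem concat_represents_complete_bipartite (n k : ℕ) (hn : 2 ≤ n) (hk : 2 ≤ k)
    (Q R : Fin k → List (Fin n ⊕ Fin n))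
    (hQ : ∀ i, IsPermOf (Q i) (leftSet n))
    (hR : ∀ i, IsPermOf (R i) (rightSet n))
    (hQmix : ∀ x y : Fin n, x ≠ y →
      ∃ i j : Fin k, (Q i).idxOf (Sum.inl x) < (Q i).idxOf (Sum.inl y) ∧
        (Q j).idxOf (Sum.inl y) < (Q j).idxOf (Sum.inl x))
    (hRmix : ∀ x y : Fin n, x ≠ y →
      ∃ i j : Fin k, (R i).idxOf (Sum.inr x) < (R i).idxOf (Sum.inr y) ∧
        (R j).idxOf (Sum.inr y) < (R j).idxOf (Sum.inr x)) :
    IsUniform ((List.ofFn fun i => Q i ++ R i).flatten) k ∧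
      Represents ((List.ofFn fun i => Q i ++ R i).flatten) (CompleteBip n) := by
  set w := (List.ofFn fun i => Q i ++ R i).flatten with hw
  -- basic counting facts
  have hQl : ∀ i (a : Fin n),
      @List.count (Fin n ⊕ Fin n) instBEqOfDecidableEq (Sum.inl a) (Q i) = 1 := fun i a =>
    (hQ i).1 (Sum.inl a) (by simp [leftSet])
  have hQr : ∀ i (b : Fin n),
      @List.count (Fin n ⊕ Fin n) instBEqOfDecidableEq (Sum.inr b) (Q i) = 0 := fun i b =>
    count_eq_zero'' fun hmem => by
      have := (hQ i).2 _ hmem; simp [leftSet] at this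
  have hRr : ∀ i (b : Fin n),
      @List.count (Fin n ⊕ Fin n) instBEqOfDecidableEq (Sum.inr b) (R i) = 1 := fun i b =>
    (hR i).1 (Sum.inr b) (by simp [rightSet])
  have hRl : ∀ i (a : Fin n),
      @List.count (Fin n ⊕ Fin n) instBEqOfDecidableEq (Sum.inl a) (R i) = 0 := fun i a =>
    count_eq_zero'' fun hmem => by
      have := (hR i).2 _ hmem; simp [rightSet] at this
  have hcount : ∀ v, @List.count (Fin n ⊕ Fin n) instBEqOfDecidableEq v w = k := by
    intro v
    rw [hw, @List.count_flatten _ instBEqOfDecidableEq v, List.map_ofFn, List.sum_ofFn]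
    have hone : ∀ i : Fin k,
        (@List.count (Fin n ⊕ Fin n) instBEqOfDecidableEq v ∘ fun i => Q i ++ R i) i = 1 := by
      intro i
      simp only [Function.comp_apply, List.count_append]
      cases v with
      | inl a => rw [hQl, hRl]
      | inr b => rw [hQr, hRr]
    rw [Finset.sum_congr rfl fun i _ => hone i]
    simp
  -- the alternation claims
  have hQmem : ∀ i z, z ∈ Q i → z.isLeft = true := fun i z hz => by
    have := (hQ i).2 _ hz; simpa [leftSet] using this
  have hRmem : ∀ i z, z ∈ R i → z.isRight = true := fun i z hz => by
    have := (hR i).2 _ hz; simpa [rightSet] using this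
  have hidx : ∀ (v : Fin n ⊕ Fin n) (l : List (Fin n ⊕ Fin n)),
      @List.idxOf _ Sum.instBEq v l = @List.idxOf _ instBEqOfDecidableEq v l :=
    fun v l => indexOf_instance_congr Sum.instBEq (sumLawfulBEq_s13 n) v l
  have haltmix : ∀ (a b : Fin n), Alternate w (Sum.inl a) (Sum.inr b) := by
    intro a b
    unfold Alternate
    have hfilter : (w.filter fun z => decide (z = Sum.inl a ∨ z = Sum.inr b)) =
        (List.replicate k [Sum.inl a, Sum.inr b]).flatten := by
      rw [hw, List.filter_flatten, List.map_ofFn]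
      have hfun : ((List.filter fun z => decide (z = Sum.inl a ∨ z = Sum.inr b)) ∘
          fun i => Q i ++ R i) = fun _ : Fin k => [Sum.inl a, Sum.inr b] := by
        funext i
        show ((Q i ++ R i).filter fun z => decide (z = Sum.inl a ∨ z = Sum.inr b)) = _
        have h1 : ((Q i).filter fun z => decide (z = Sum.inl a ∨ z = Sum.inr b)) = [Sum.inl a] := by
          refine filter_eq_single _ _ _ (hQl i a) (by simp) ?_
          intro z hz hpz
          rcases of_decide_eq_true hpz with rfl | rfl
          · rfl
          · exact absurd (hQmem i _ hz) (by simp)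
        have h2 : ((R i).filter fun z => decide (z = Sum.inl a ∨ z = Sum.inr b)) = [Sum.inr b] := by
          refine filter_eq_single _ _ _ (hRr i b) (by simp) ?_
          intro z hz hpz
          rcases of_decide_eq_true hpz with rfl | rfl
          · exact absurd (hRmem i _ hz) (by simp)
          · rfl
        rw [List.filter_append, h1, h2]
        rfl
      rw [hfun, List.ofFn_const]
    rw [hfilter]
    exact (chain'_flatten_replicate_pair _ _ (by simp) k).1
  have hnotl : ∀ (a c : Fin n), a ≠ c → ¬ Alternate w (Sum.inl a) (Sum.inl c) := by
    intro a c hac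
    have hxy : (Sum.inl a : Fin n ⊕ Fin n) ≠ Sum.inl c := by simp [hac]
    set p : Fin n ⊕ Fin n → Bool := fun z => decide (z = Sum.inl a ∨ z = Sum.inl c) with hp
    have hfil : ∀ i, ((Q i ++ R i).filter p) = (Q i).filter p := by
      intro i
      have h0 : (R i).filter p = [] := List.filter_eq_nil_iff.mpr (by
        intro z hz hpz
        rcases of_decide_eq_true hpz with rfl | rfl <;>
          exact absurd (hRmem i _ hz) (by simp))
      rw [List.filter_append, h0, List.append_nil]
    have hopt : ∀ i, (Q i).filter p = [Sum.inl a, Sum.inl c] ∨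
        (Q i).filter p = [Sum.inl c, Sum.inl a] := by
      intro i
      exact filter_eq_pair _ p _ _ hxy (hQl i a) (hQl i c) (by simp [hp]) (by simp [hp])
        (fun z hz hpz => of_decide_eq_true hpz)
    obtain ⟨i, j, hij1, hij2⟩ := hQmix a c hac
    rw [hidx, hidx] at hij1 hij2
    have hFi : (Q i).filter p = [Sum.inl a, Sum.inl c] := by
      rcases hopt i with h | h
      · exact h
      · have := indexOf_lt_of_filter_pair (Q i) p _ _ hxy.symm h
        omega
    have hFj : (Q j).filter p = [Sum.inl c, Sum.inl a] := by
      rcases hopt j with h | h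
      · have := indexOf_lt_of_filter_pair (Q j) p _ _ hxy h
        omega
      · exact h
    unfold Alternate
    have hrw : w.filter p = (List.ofFn fun i => (Q i ++ R i).filter p).flatten := by
      rw [hw, List.filter_flatten, List.map_ofFn]
      rfl
    rw [show (fun z => decide (z = Sum.inl a ∨ z = Sum.inl c)) = p from rfl, hrw]
    refine not_chain'_flatten k _ _ _ hxy (fun m => by rw [hfil]; exact hopt m)
      (i := i) (j := j) ?_
    rw [hfil, hfil, hFi, hFj]
    simp [hxy]
  have hnotr : ∀ (b d : Fin n), b ≠ d → ¬ Alternate w (Sum.inr b) (Sum.inr d) := by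
    intro b d hbd
    have hxy : (Sum.inr b : Fin n ⊕ Fin n) ≠ Sum.inr d := by simp [hbd]
    set p : Fin n ⊕ Fin n → Bool := fun z => decide (z = Sum.inr b ∨ z = Sum.inr d) with hp
    have hfil : ∀ i, ((Q i ++ R i).filter p) = (R i).filter p := by
      intro i
      have h0 : (Q i).filter p = [] := List.filter_eq_nil_iff.mpr (by
        intro z hz hpz
        rcases of_decide_eq_true hpz with rfl | rfl <;>
          exact absurd (hQmem i _ hz) (by simp))
      rw [List.filter_append, h0, List.nil_append]
    have hopt : ∀ i, (R i).filter p = [Sum.inr b, Sum.inr d] ∨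
        (R i).filter p = [Sum.inr d, Sum.inr b] := by
      intro i
      exact filter_eq_pair _ p _ _ hxy (hRr i b) (hRr i d) (by simp [hp]) (by simp [hp])
        (fun z hz hpz => of_decide_eq_true hpz)
    obtain ⟨i, j, hij1, hij2⟩ := hRmix b d hbd
    rw [hidx, hidx] at hij1 hij2
    have hFi : (R i).filter p = [Sum.inr b, Sum.inr d] := by
      rcases hopt i with h | h
      · exact h
      · have := indexOf_lt_of_filter_pair (R i) p _ _ hxy.symm h
        omega
    have hFj : (R j).filter p = [Sum.inr d, Sum.inr b] := by
      rcases hopt j with h | h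
      · have := indexOf_lt_of_filter_pair (R j) p _ _ hxy h
        omega
      · exact h
    unfold Alternate
    have hrw : w.filter p = (List.ofFn fun i => (Q i ++ R i).filter p).flatten := by
      rw [hw, List.filter_flatten, List.map_ofFn]
      rfl
    rw [show (fun z => decide (z = Sum.inr b ∨ z = Sum.inr d)) = p from rfl, hrw]
    refine not_chain'_flatten k _ _ _ hxy (fun m => by rw [hfil]; exact hopt m)
      (i := i) (j := j) ?_
    rw [hfil, hfil, hFi, hFj]
    simp [hxy]
  refine ⟨hcount, fun v => mem_of_count_pos' (by rw [hcount]; omega), ?_⟩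
  intro x y hxy
  cases x with
  | inl a =>
    cases y with
    | inl c =>
      have hac : a ≠ c := fun e => hxy (by rw [e])
      refine iff_of_false ?_ (hnotl a c hac)
      rw [CompleteBip, SimpleGraph.fromRel_adj]
      simp
    | inr b =>
      refine iff_of_true ?_ (haltmix a b)
      rw [CompleteBip, SimpleGraph.fromRel_adj]
      simp
  | inr b =>
    cases y with
    | inl a =>
      have halt : Alternate w (Sum.inr b) (Sum.inl a) := by
        unfold Alternate
        rw [alternate_comm']
        exact haltmix a b
      refine iff_of_true ?_ halt
      rw [CompleteBip, SimpleGraph.fromRel_adj]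
      simp [hxy]
    | inr d =>
      have hbd : b ≠ d := fun e => hxy (by rw [e])
      refine iff_of_false ?_ (hnotr b d hbd)
      rw [CompleteBip, SimpleGraph.fromRel_adj]
      simp
end
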